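/- arXiv:2209.10313 — 7 statements merged into one kernel-verified Lean document; each statement's English description precedes it below -/
import Mathlib

section
/- For acceptors A₁ and A₂, the concatenation A₁ ∘ A₂ (obtained by appending the sequence A₂ after A₁) satisfies L(A₁ ∘ A₂) = { w₁w₂ | w₁ ∈ L(A₁) and w₂ ∈ L(A₂) }. -/
/-- A border function on a well-ordered alphabet, viewed as a finite set of ordered pairs
(a functional finite graph) that is defined at least for the minimal symbol `⊥`. -/
structure BorderFun (α : Type*) [LinearOrder α] [OrderBot α] (D : Type*) where
  graph : Finset (α × D)
  functional : ∀ p ∈ graph, ∀ q ∈ graph, p.1 = q.1 → p.2 = q.2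
  bot_mem : ∃ d, (⊥, d) ∈ graph

namespace BorderFun
open Classical

variable {α : Type*} [LinearOrder α] [OrderBot α] {D D' D₁ D₂ : Type*}

/-- The domain of a border function. -/
def dom (φ : BorderFun α D) : Finset α := φ.graph.image Prod.fst

lemma filter_nonempty (φ : BorderFun α D) (σ : α) :
    (φ.dom.filter (fun τ => τ ≤ σ)).Nonempty := by
  obtain ⟨d, hd⟩ := φ.bot_mem
  exact ⟨⊥, Finset.mem_filter.mpr ⟨Finset.mem_image.mpr ⟨(⊥, d), hd, rfl⟩, bot_le⟩⟩

/-- `σ^≤`: the greatest element of the domain that is `≤ σ`. -/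
def maxLe (φ : BorderFun α D) (σ : α) : α :=
  (φ.dom.filter (fun τ => τ ≤ σ)).max' (φ.filter_nonempty σ)

lemma exists_leVal (φ : BorderFun α D) (σ : α) : ∃ d, (φ.maxLe σ, d) ∈ φ.graph := by
  have h := Finset.max'_mem _ (φ.filter_nonempty σ)
  have h2 := (Finset.mem_filter.mp h).1
  obtain ⟨p, hp, hfst⟩ := Finset.mem_image.mp h2
  exact ⟨p.2, by rw [show φ.maxLe σ = p.1 from hfst.symm]; exact hp⟩

/-- `φ^≤(σ)`: the value of `φ` at the greatest domain element `≤ σ`. -/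
noncomputable def leVal (φ : BorderFun α D) (σ : α) : D :=
  Classical.choose (φ.exists_leVal σ)

/-- Two border functions are equivalent if they induce the same total function `φ^≤`. -/
def Equiv (φ ψ : BorderFun α D) : Prop := ∀ σ, φ.leVal σ = ψ.leVal σ

/-- The minimization of a border function: remove every border whose immediate
predecessor border carries the same value. -/
noncomputable def minimize (φ : BorderFun α D) : BorderFun α D where
  graph := φ.graph.filter (fun p => ∀ q ∈ φ.graph, q.1 < p.1 →
    (∀ r ∈ φ.graph, ¬(q.1 < r.1 ∧ r.1 < p.1)) → q.2 ≠ p.2)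
  functional := fun p hp q hq =>
    φ.functional p (Finset.mem_of_mem_filter p hp) q (Finset.mem_of_mem_filter q hq)
  bot_mem := by
    obtain ⟨d, hd⟩ := φ.bot_mem
    exact ⟨d, Finset.mem_filter.mpr ⟨hd, fun q hq hlt => absurd hlt (not_lt_bot)⟩⟩

/-- Pointwise application of a function to the values of a border function (without minimization). -/
noncomputable def map (f : D → D') (φ : BorderFun α D) : BorderFun α D' where
  graph := φ.graph.image (fun p => (p.1, f p.2))
  functional := by
    intro p hp q hq h
    obtain ⟨a, ha, rfl⟩ := Finset.mem_image.mp hp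
    obtain ⟨b, hb, rfl⟩ := Finset.mem_image.mp hq
    simp only at h ⊢
    rw [φ.functional a ha b hb h]
  bot_mem := by
    obtain ⟨d, hd⟩ := φ.bot_mem
    exact ⟨f d, Finset.mem_image.mpr ⟨(⊥, d), hd, rfl⟩⟩

/-- The application of `f` on `φ`: the minimization of the pointwise image. -/
noncomputable def appF (f : D → D') (φ : BorderFun α D) : BorderFun α D' :=
  (φ.map f).minimize

/-- The product of two border functions. -/
noncomputable def prod (φ₁ : BorderFun α D₁) (φ₂ : BorderFun α D₂) :
    BorderFun α (D₁ × D₂) where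
  graph := (φ₁.dom ∪ φ₂.dom).image (fun σ => (σ, (φ₁.leVal σ, φ₂.leVal σ)))
  functional := by
    intro p hp q hq h
    obtain ⟨a, ha, rfl⟩ := Finset.mem_image.mp hp
    obtain ⟨b, hb, rfl⟩ := Finset.mem_image.mp hq
    simp only at h ⊢
    subst h
    rfl
  bot_mem := by
    obtain ⟨d, hd⟩ := φ₁.bot_mem
    exact ⟨_, Finset.mem_image.mpr ⟨⊥,
      Finset.mem_union_left _ (Finset.mem_image.mpr ⟨(⊥, d), hd, rfl⟩), rfl⟩⟩

/-- The constant border function with the single border `(⊥, d)`. -/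
def botFun (d : D) : BorderFun α D :=
  ⟨{(⊥, d)}, by
    intro p hp q hq _
    simp only [Finset.mem_singleton] at hp hq
    rw [hp, hq], ⟨d, by simp⟩⟩

end BorderFun

/-- An acceptor: a flat list of states, each consisting of a set of relative
ε-transitions and a border function giving relative symbol transitions
(`none` = `#`, no transition). State `i` (1-indexed) is `states[i-1]`;
the initial state is `1` and the accepting state is `length + 1`. -/
abbrev Acceptor (α : Type*) [LinearOrder α] [OrderBot α] :=
  List (Finset ℤ × BorderFun α (Option ℤ))

namespace Acceptor

variable {α : Type*} [LinearOrder α] [OrderBot α]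

/-- The committing condition: no transitions to states `< 2` or `> n + 1`. -/
def Valid (M : Acceptor α) : Prop :=
  ∀ i (hi : i < M.length),
    (∀ j ∈ (M.get ⟨i, hi⟩).1,
        2 ≤ (i + 1 : ℤ) + j ∧ (i + 1 : ℤ) + j ≤ (M.length : ℤ) + 1) ∧
    (∀ p ∈ (M.get ⟨i, hi⟩).2.graph, ∀ j : ℤ, p.2 = some j →
        2 ≤ (i + 1 : ℤ) + j ∧ (i + 1 : ℤ) + j ≤ (M.length : ℤ) + 1)

/-- The transition relation on configurations `(state, word read so far)`. -/
inductive Step (M : Acceptor α) : ℤ × List α → ℤ × List α → Prop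
  | eps {i : ℕ} (hi : i < M.length) {j : ℤ} (hj : j ∈ (M.get ⟨i, hi⟩).1) (w : List α) :
      Step M ((i : ℤ) + 1, w) ((i : ℤ) + 1 + j, w)
  | symb {i : ℕ} (hi : i < M.length) {σ : α} {j : ℤ}
      (hj : (M.get ⟨i, hi⟩).2.leVal σ = some j) (w : List α) :
      Step M ((i : ℤ) + 1, w) ((i : ℤ) + 1 + j, w ++ [σ])

/-- `M` accepts `w` iff `(1, ε) ⊢* (‖M‖ + 1, w)`. -/
def Accepts (M : Acceptor α) (w : List α) : Prop :=
  Relation.ReflTransGen (Step M) (1, []) ((M.length : ℤ) + 1, w)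

/-- The language of an acceptor. -/
def Lang (M : Acceptor α) : Set (List α) := {w | M.Accepts w}

/-- The acceptor `A_ε`, which is the empty sequence. -/
def epsA : Acceptor α := []

/-- The one-state acceptor `A_∅` accepting nothing. -/
def emptyA : Acceptor α := [(∅, BorderFun.botFun none)]

/-- `M{i →^ε j}`: add the relative ε-transition `j - i` to state `i`. -/
def addEps (M : Acceptor α) (i j : ℤ) : Acceptor α :=
  M.modify (i - 1).toNat (fun p => (insert (j - i) p.1, p.2))

/-- The union `M₁ | M₂ := (M₁ ∘ A_∅ ∘ M₂){1 →^ε ‖M₁‖+2, ‖M₁‖+1 →^ε ‖M₁‖+‖M₂‖+2}`. -/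
def union (M₁ M₂ : Acceptor α) : Acceptor α :=
  addEps (addEps (M₁ ++ emptyA ++ M₂) 1 ((M₁.length : ℤ) + 2))
    ((M₁.length : ℤ) + 1) ((M₁.length : ℤ) + (M₂.length : ℤ) + 2)

/-- The Kleene star
`M* := (A_∅ ∘ M ∘ A_∅){1 →^ε 2, 2 →^ε ‖M‖+3, ‖M‖+2 →^ε 2}`. -/
def star (M : Acceptor α) : Acceptor α :=
  addEps (addEps (addEps (emptyA ++ M ++ emptyA) 1 2) 2 ((M.length : ℤ) + 3))
    ((M.length : ℤ) + 2) 2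

/-- The non-empty repetition
`M⁺ := (A_∅ ∘ M ∘ A_∅){1 →^ε 2, ‖M‖+2 →^ε 2, ‖M‖+2 →^ε ‖M‖+3}`. -/
def plus (M : Acceptor α) : Acceptor α :=
  addEps (addEps (addEps (emptyA ++ M ++ emptyA) 1 2) ((M.length : ℤ) + 2) 2)
    ((M.length : ℤ) + 2) ((M.length : ℤ) + 3)

/-- The optional acceptor `M? := M{1 →^ε ‖M‖+1}`. -/
def opt (M : Acceptor α) : Acceptor α := addEps M 1 ((M.length : ℤ) + 1)

end Acceptor

namespace Acceptor

variable {α : Type*} [LinearOrder α] [OrderBot α]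

lemma leVal_mem_graph {D : Type*} (φ : BorderFun α D) (σ : α) :
    (φ.maxLe σ, φ.leVal σ) ∈ φ.graph :=
  Classical.choose_spec (φ.exists_leVal σ)

lemma get_app_left (M₁ M₂ : Acceptor α) {i : ℕ} (hi : i < M₁.length)
    (hi' : i < (M₁ ++ M₂).length) :
    (M₁ ++ M₂).get ⟨i, hi'⟩ = M₁.get ⟨i, hi⟩ := by
  simp [List.get_eq_getElem, List.getElem_append_left hi]

lemma get_app_right (M₁ M₂ : Acceptor α) {i : ℕ} (hi : i < M₂.length)
    (hi' : M₁.length + i < (M₁ ++ M₂).length) :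
    (M₁ ++ M₂).get ⟨M₁.length + i, hi'⟩ = M₂.get ⟨i, hi⟩ := by
  simp [List.get_eq_getElem,
    List.getElem_append_right (by omega : M₁.length ≤ M₁.length + i)]

lemma step_left {M₁ M₂ : Acceptor α} {c c' : ℤ × List α} (h : Step M₁ c c') :
    Step (M₁ ++ M₂) c c' := by
  cases h with
  | @eps i hi j hj w =>
    have hi' : i < (M₁ ++ M₂).length := by simp; omega
    exact Step.eps hi' (by rw [get_app_left M₁ M₂ hi hi']; exact hj) w
  | @symb i hi σ j hj w =>
    have hi' : i < (M₁ ++ M₂).length := by simp; omega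
    exact Step.symb hi' (by rw [get_app_left M₁ M₂ hi hi']; exact hj) w

lemma step_right {M₁ M₂ : Acceptor α} (u : List α) {c c' : ℤ × List α}
    (h : Step M₂ c c') :
    Step (M₁ ++ M₂) (c.1 + M₁.length, u ++ c.2) (c'.1 + M₁.length, u ++ c'.2) := by
  cases h with
  | @eps i hi j hj w =>
    have hi' : M₁.length + i < (M₁ ++ M₂).length := by simp; omega
    have := Step.eps hi' (by rw [get_app_right M₁ M₂ hi hi']; exact hj) (u ++ w)
    convert this using 2 <;> push_cast <;> ring
  | @symb i hi σ j hj w =>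
    have hi' : M₁.length + i < (M₁ ++ M₂).length := by simp; omega
    have := Step.symb hi' (by rw [get_app_right M₁ M₂ hi hi']; exact hj) (u ++ w)
    convert this using 2
    · push_cast; ring
    · push_cast; ring
    · simp

lemma rtg_right {M₁ M₂ : Acceptor α} (u : List α) {c c' : ℤ × List α}
    (h : Relation.ReflTransGen (Step M₂) c c') :
    Relation.ReflTransGen (Step (M₁ ++ M₂)) (c.1 + M₁.length, u ++ c.2)
      (c'.1 + M₁.length, u ++ c'.2) := by
  induction h with
  | refl => exact .refl
  | tail _ hstep ih => exact ih.tail (step_right u hstep)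

lemma decompose {M₁ M₂ : Acceptor α} (h₁ : Valid M₁) (h₂ : Valid M₂)
    {c : ℤ × List α} (h : Relation.ReflTransGen (Step (M₁ ++ M₂)) (1, []) c) :
    (1 ≤ c.1 ∧ c.1 ≤ (M₁.length : ℤ) ∧ Relation.ReflTransGen (Step M₁) (1, []) c) ∨
    (∃ w₁ w₂, c.2 = w₁ ++ w₂ ∧
      Relation.ReflTransGen (Step M₁) (1, []) ((M₁.length : ℤ) + 1, w₁) ∧
      Relation.ReflTransGen (Step M₂) (1, []) (c.1 - (M₁.length : ℤ), w₂) ∧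
      (M₁.length : ℤ) + 1 ≤ c.1 ∧ c.1 ≤ (M₁.length : ℤ) + (M₂.length : ℤ) + 1) := by
  induction h with
  | refl =>
    rcases Nat.eq_zero_or_pos M₁.length with h0 | h0
    · right
      refine ⟨[], [], rfl, ?_, ?_, by simp [h0], by push_cast; omega⟩
      · have : ((M₁.length : ℤ) + 1, ([] : List α)) = ((1 : ℤ), ([] : List α)) := by
          simp [h0]
        rw [this]
      · have : ((1 : ℤ), ([] : List α)).1 - (M₁.length : ℤ) = 1 := by simp [h0]
        simp only [this]
        exact .refl
    · left
      exact ⟨le_refl _, by simp; omega, .refl⟩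
  | @tail b c hab hstep ih =>
    cases hstep with
    | @eps i hi j hj w =>
      simp only [List.length_append] at hi
      by_cases hcase : i < M₁.length
      · -- step inside M₁
        have hi1 : i < (M₁ ++ M₂).length := by simp; omega
        rw [get_app_left M₁ M₂ hcase hi1] at hj
        have hb := (h₁ i hcase).1 j hj
        rcases ih with ⟨_, _, run₁⟩ | ⟨w₁, w₂, hw, r₁, r₂, hp, _⟩
        · have run := run₁.tail (Step.eps hcase hj w)
          by_cases hend : (i : ℤ) + 1 + j ≤ (M₁.length : ℤ)
          · left; exact ⟨by omega, hend, run⟩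
          · right
            have he : (i : ℤ) + 1 + j = (M₁.length : ℤ) + 1 := by omega
            refine ⟨w, [], by simp, he ▸ run, ?_, by omega, by omega⟩
            have : ((i : ℤ) + 1 + j, w).1 - (M₁.length : ℤ) = 1 := by omega
            simp only [this]
            exact .refl
        · exfalso; omega
      · -- step inside M₂
        have hle : M₁.length ≤ i := le_of_not_gt hcase
        obtain ⟨i', rfl⟩ : ∃ i', i = M₁.length + i' := ⟨i - M₁.length, by omega⟩
        have hi2 : i' < M₂.length := by omega
        have hi1 : M₁.length + i' < (M₁ ++ M₂).length := by simp; omega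
        rcases ih with ⟨_, hle1, _⟩ | ⟨w₁, w₂, hw, r₁, r₂, hp, _⟩
        · exfalso; omega
        · rw [get_app_right M₁ M₂ hi2 hi1] at hj
          have hb := (h₂ i' hi2).1 j hj
          have hstate : ((M₁.length + i' : ℕ) : ℤ) + 1 - (M₁.length : ℤ)
              = (i' : ℤ) + 1 := by push_cast; ring
          rw [show (((M₁.length + i' : ℕ) : ℤ) + 1, w).1 - (M₁.length : ℤ)
              = (i' : ℤ) + 1 from hstate] at r₂
          have r₂' := r₂.tail (Step.eps hi2 hj w₂)
          right
          refine ⟨w₁, w₂, hw, r₁, ?_, by push_cast; omega, by push_cast; omega⟩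
          have : (((M₁.length + i' : ℕ) : ℤ) + 1 + j, w).1 - (M₁.length : ℤ)
              = (i' : ℤ) + 1 + j := by push_cast; ring
          simp only [this]
          exact r₂'
    | @symb i hi σ j hj w =>
      simp only [List.length_append] at hi
      by_cases hcase : i < M₁.length
      · have hi1 : i < (M₁ ++ M₂).length := by simp; omega
        rw [get_app_left M₁ M₂ hcase hi1] at hj
        have hmem := leVal_mem_graph (M₁.get ⟨i, hcase⟩).2 σ
        have hb := (h₁ i hcase).2 _ hmem j hj
        rcases ih with ⟨_, _, run₁⟩ | ⟨w₁, w₂, hw, r₁, r₂, hp, _⟩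
        · have run := run₁.tail (Step.symb hcase hj w)
          by_cases hend : (i : ℤ) + 1 + j ≤ (M₁.length : ℤ)
          · left; exact ⟨by omega, hend, run⟩
          · right
            have he : (i : ℤ) + 1 + j = (M₁.length : ℤ) + 1 := by omega
            refine ⟨w ++ [σ], [], by simp, he ▸ run, ?_, by omega, by omega⟩
            have : ((i : ℤ) + 1 + j, w ++ [σ]).1 - (M₁.length : ℤ) = 1 := by omega
            simp only [this]
            exact .refl
        · exfalso; omega
      · have hle : M₁.length ≤ i := le_of_not_gt hcase
        obtain ⟨i', rfl⟩ : ∃ i', i = M₁.length + i' := ⟨i - M₁.length, by omega⟩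
        have hi2 : i' < M₂.length := by omega
        have hi1 : M₁.length + i' < (M₁ ++ M₂).length := by simp; omega
        rcases ih with ⟨_, hle1, _⟩ | ⟨w₁, w₂, hw, r₁, r₂, hp, _⟩
        · exfalso; omega
        · rw [get_app_right M₁ M₂ hi2 hi1] at hj
          have hmem := leVal_mem_graph (M₂.get ⟨i', hi2⟩).2 σ
          have hb := (h₂ i' hi2).2 _ hmem j hj
          have hstate : ((M₁.length + i' : ℕ) : ℤ) + 1 - (M₁.length : ℤ)
              = (i' : ℤ) + 1 := by push_cast; ring
          rw [show (((M₁.length + i' : ℕ) : ℤ) + 1, w).1 - (M₁.length : ℤ)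
              = (i' : ℤ) + 1 from hstate] at r₂
          have r₂' := r₂.tail (Step.symb hi2 hj w₂)
          right
          refine ⟨w₁, w₂ ++ [σ], by have hw' : w = w₁ ++ w₂ := hw; show w ++ [σ] = _; rw [hw']; simp, r₁, ?_, by push_cast; omega,
            by push_cast; omega⟩
          have : (((M₁.length + i' : ℕ) : ℤ) + 1 + j, w ++ [σ]).1 - (M₁.length : ℤ)
              = (i' : ℤ) + 1 + j := by push_cast; ring
          simp only [this]
          exact r₂'

end Acceptor

/-- The concatenation of two (committing) acceptors accepts exactly
the concatenations of their words: `L(A₁ ∘ A₂) = { w₁w₂ | w₁ ∈ L(A₁), w₂ ∈ L(A₂) }`. -/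
theorem concat_lang {α : Type*} [LinearOrder α] [OrderBot α]
    (M₁ M₂ : Acceptor α) (h₁ : Acceptor.Valid M₁) (h₂ : Acceptor.Valid M₂) :
    Acceptor.Lang (M₁ ++ M₂) =
      {w : List α | ∃ w₁ ∈ Acceptor.Lang M₁, ∃ w₂ ∈ Acceptor.Lang M₂, w = w₁ ++ w₂} := by
  ext w
  simp only [Acceptor.Lang, Set.mem_setOf_eq]
  constructor
  · intro hw
    rcases Acceptor.decompose h₁ h₂ hw with ⟨_, hle, _⟩ | ⟨w₁, w₂, hw', r₁, r₂, _, _⟩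
    · exfalso
      simp only [List.length_append] at hle
      push_cast at hle; omega
    · refine ⟨w₁, r₁, w₂, ?_, hw'⟩
      have e : (((M₁ ++ M₂).length : ℤ) + 1, w).1 - (M₁.length : ℤ)
          = (M₂.length : ℤ) + 1 := by simp; ring
      rw [e] at r₂
      exact r₂
  · rintro ⟨w₁, hw₁, w₂, hw₂, rfl⟩
    have r₁ : Relation.ReflTransGen (Acceptor.Step (M₁ ++ M₂)) (1, [])
        ((M₁.length : ℤ) + 1, w₁) := Relation.ReflTransGen.mono (r := Acceptor.Step M₁) (fun _ _ h => Acceptor.step_left h) _ _ hw₁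
    have r₂ := Acceptor.rtg_right (M₁ := M₁) w₁ hw₂
    simp only [List.append_nil] at r₂
    have e1 : (((1 : ℤ), ([] : List α)).1 + (M₁.length : ℤ), w₁)
        = ((M₁.length : ℤ) + 1, w₁) := by simp [add_comm]
    rw [e1] at r₂
    have r := r₁.trans r₂
    have e2 : ((((M₂.length : ℤ) + 1, w₂).1 + (M₁.length : ℤ), w₁ ++ w₂) : ℤ × List α)
        = (((M₁ ++ M₂).length : ℤ) + 1, w₁ ++ w₂) := by
      simp only [List.length_append, Prod.mk.injEq]
      exact ⟨by push_cast; ring, by trivial⟩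
    rw [e2] at r
    exact r
end

section
/- In any run (1,ε) ⊢* (n₁+n₂+1, w) of the concatenation A₁ ∘ A₂ (where n₁ = ‖A₁‖, n₂ = ‖A₂‖), the first configuration (n', w') with n' > n₁ satisfies n' = n₁ + 1. -/
/-- In any run `(1, ε) ⊢* (n₁+n₂+1, w)` of the concatenation
`A₁ ∘ A₂` (with `n₁ = ‖A₁‖`, `n₂ = ‖A₂‖`), the first configuration `(n', w')`
with `n' > n₁` satisfies `n' = n₁ + 1`. -/
theorem concat_first_crossing {α : Type*} [LinearOrder α] [OrderBot α]
    (M₁ M₂ : Acceptor α) (h₁ : Acceptor.Valid M₁) (h₂ : Acceptor.Valid M₂)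
    (w v w' : List α) (m n' : ℤ)
    (hstart : Relation.ReflTransGen (Acceptor.Step (M₁ ++ M₂)) (1, []) (m, v))
    (hstep : Acceptor.Step (M₁ ++ M₂) (m, v) (n', w'))
    (hrest : Relation.ReflTransGen (Acceptor.Step (M₁ ++ M₂)) (n', w')
      ((M₁.length : ℤ) + (M₂.length : ℤ) + 1, w))
    (hm : m ≤ (M₁.length : ℤ)) (hn : (M₁.length : ℤ) < n') :
    n' = (M₁.length : ℤ) + 1 := by
  cases hstep with
  | eps hi hj u =>
    rename_i i j
    have hi1 : i < M₁.length := by omega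
    have hget : ((M₁ ++ M₂).get ⟨i, hi⟩) = M₁.get ⟨i, hi1⟩ := by
      exact List.getElem_append_left hi1
    rw [hget] at hj
    have := (h₁ i hi1).1 j hj
    omega
  | symb hi hj u =>
    rename_i i σ j
    have hi1 : i < M₁.length := by omega
    have hget : ((M₁ ++ M₂).get ⟨i, hi⟩) = M₁.get ⟨i, hi1⟩ := by
      exact List.getElem_append_left hi1
    rw [hget] at hj
    have hmem := Classical.choose_spec ((M₁.get ⟨i, hi1⟩).2.exists_leVal σ)
    have := (h₁ i hi1).2 _ hmem j hj
    omega
end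

section
/- For every acceptor A, the Kleene star A* satisfies: w ∈ L(A*) if and only if there exist k ≥ 0 and words w₁,...,w_k ∈ L(A) such that w = w₁w₂⋯w_k. -/
open Relation

namespace BorderFun
variable {α : Type*} [LinearOrder α] [OrderBot α] {D : Type*}

lemma leVal_mem (φ : BorderFun α D) (σ : α) : (φ.maxLe σ, φ.leVal σ) ∈ φ.graph :=
  Classical.choose_spec (φ.exists_leVal σ)

lemma botFun_leVal (d : D) (σ : α) : (botFun (α := α) d).leVal σ = d := by
  have h := leVal_mem (botFun (α := α) d) σ
  simp [botFun] at h
  exact h.2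

end BorderFun

namespace Acceptor
variable {α : Type*} [LinearOrder α] [OrderBot α]

lemma step_shift {M : Acceptor α} {p q : ℤ} {u v : List α} (x : List α)
    (hs : Step M (p, u) (q, v)) : Step M (p, x ++ u) (q, x ++ v) := by
  cases hs with
  | eps hi hj w => exact Step.eps hi hj _
  | symb hi hj w => rw [← List.append_assoc]; exact Step.symb hi hj _

lemma rtg_shift {M : Acceptor α} {x : List α} :
    ∀ {c d : ℤ × List α}, ReflTransGen (Step M) c d →
      ReflTransGen (Step M) (c.1, x ++ c.2) (d.1, x ++ d.2) := by
  intro c d h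
  induction h with
  | refl => exact .refl
  | tail _ hstep ih => exact ih.tail (step_shift x hstep)

lemma step_drop {M : Acceptor α} {p q : ℤ} {u v : List α}
    (hs : Step M (p, u) (q, v)) : ∃ d, v = u ++ d ∧ ∀ x, Step M (p, x) (q, x ++ d) := by
  cases hs with
  | eps hi hj w => exact ⟨[], by simp, fun x => by simpa using Step.eps hi hj x⟩
  | symb hi hj w => exact ⟨_, rfl, fun x => Step.symb hi hj x⟩

lemma star_length (M : Acceptor α) : (star M).length = M.length + 2 := by
  simp [star, addEps, emptyA]

end Acceptor

namespace Acceptor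
variable {α : Type*} [LinearOrder α] [OrderBot α]

lemma star_eq (M : Acceptor α) :
    star M = List.modify
      (List.modify
        (List.modify
          ((∅, BorderFun.botFun none) :: (M ++ [(∅, BorderFun.botFun none)])) 0 (fun p => (insert ((2:ℤ) - 1) p.1, p.2))) 1 (fun p => (insert (((M.length:ℤ)+3) - 2) p.1, p.2))) (M.length+1) (fun p => (insert (2 - ((M.length:ℤ)+2)) p.1, p.2)) := by
  have hb : (emptyA ++ M ++ emptyA : Acceptor α) =
      (∅, BorderFun.botFun none) :: (M ++ [(∅, BorderFun.botFun none)]) := by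
    simp [emptyA]
  simp only [star, addEps, hb]
  norm_num
  rw [show (((M.length:ℤ)+2).toNat - 1) = M.length + 1 by omega, List.modify_succ_cons]

lemma star_getElem_zero (M : Acceptor α) (h : 0 < (star M).length) :
    (star M)[0] = ({1}, BorderFun.botFun none) := by
  simp [star_eq, List.getElem_modify]

lemma star_getElem_mid (M : Acceptor α) (i : ℕ) (hi : i < M.length)
    (h : i + 1 < (star M).length) :
    (star M)[i+1] = (if i = 0 then insert ((M.length:ℤ)+1) (M[i]).1 else (M[i]).1, (M[i]).2) := by
  simp only [star_eq, List.getElem_modify]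
  rw [if_neg (show ¬ (M.length + 1 = i + 1) by omega), if_neg (show ¬ (0 = i + 1) by omega)]
  have h3 : ((∅, BorderFun.botFun none) :: (M ++ [(∅, BorderFun.botFun (α := α) none)]))[i+1]'(by simp; omega) = M[i] := by
    simp [List.getElem_cons_succ, List.getElem_append, hi]
  rcases Nat.eq_zero_or_pos i with h0 | h0
  · subst h0
    rw [if_pos rfl, h3, if_pos rfl]
    have : ((M.length:ℤ) + 3 - 2) = (M.length:ℤ) + 1 := by omega
    rw [this]
  · rw [if_neg (by omega), h3, if_neg (by omega)]

lemma star_getElem_last (M : Acceptor α) (h : M.length + 1 < (star M).length) :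
    (star M)[M.length + 1] =
      (if M.length = 0 then {(0:ℤ), 1} else {-(M.length:ℤ)}, BorderFun.botFun none) := by
  simp only [star_eq, List.getElem_modify, if_pos rfl]
  have h3 : ((∅, BorderFun.botFun none) :: (M ++ [(∅, BorderFun.botFun (α := α) none)]))[M.length+1]'(by simp) = (∅, BorderFun.botFun (α := α) none) := by
    simp [List.getElem_cons_succ, List.getElem_append]
  rcases Nat.eq_zero_or_pos M.length with h0 | h0
  · rw [if_pos (show (1:ℕ) = M.length + 1 by omega),
      if_neg (show ¬ ((0:ℕ) = M.length + 1) by omega), h3, if_pos h0, h0]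
    norm_num
  · rw [if_neg (show ¬ ((1:ℕ) = M.length + 1) by omega),
      if_neg (show ¬ ((0:ℕ) = M.length + 1) by omega), h3]
    rw [if_pos trivial, if_neg (show ¬ M.length = 0 by omega)]
    have h4 : (2 - ((M.length:ℤ)+2)) = -(M.length:ℤ) := by omega
    simp [h4]

end Acceptor

namespace Acceptor
variable {α : Type*} [LinearOrder α] [OrderBot α]

lemma step_cast {M : Acceptor α} {p q p' q' : ℤ} {u v : List α}
    (hs : Step M (p, u) (q, v)) (hp : p = p') (hq : q = q') : Step M (p', u) (q', v) := by
  subst hp; subst hq; exact hs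

lemma star_getElem_mid' (M : Acceptor α) (m i : ℕ) (hm : m = i + 1) (hi : i < M.length)
    (h : m < (star M).length) :
    (star M)[m] = (if i = 0 then insert ((M.length:ℤ)+1) (M[i]).1 else (M[i]).1, (M[i]).2) := by
  subst hm; exact star_getElem_mid M i hi h

lemma star_getElem_last' (M : Acceptor α) (m : ℕ) (hm : m = M.length + 1)
    (h : m < (star M).length) :
    (star M)[m] =
      (if M.length = 0 then {(0:ℤ), 1} else {-(M.length:ℤ)}, BorderFun.botFun none) := by
  subst hm; exact star_getElem_last M h

lemma star_step_init (M : Acceptor α) (u : List α) :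
    Step (star M) (1, u) (2, u) := by
  have hl : 0 < (star M).length := by rw [star_length]; omega
  have hj : (1:ℤ) ∈ ((star M).get ⟨0, hl⟩).1 := by
    simp [List.get_eq_getElem, star_getElem_zero]
  exact step_cast (Step.eps hl hj u) (by norm_num) (by norm_num)

lemma star_step_loop (M : Acceptor α) (u : List α) :
    Step (star M) ((M.length:ℤ)+2, u) (2, u) := by
  have hl : M.length + 1 < (star M).length := by rw [star_length]; omega
  have hj : (-(M.length:ℤ)) ∈ ((star M).get ⟨M.length + 1, hl⟩).1 := by
    simp only [List.get_eq_getElem, star_getElem_last]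
    rcases Nat.eq_zero_or_pos M.length with h0 | h0
    · rw [if_pos h0, h0]; norm_num
    · rw [if_neg (by omega)]; exact Finset.mem_singleton_self _
  exact step_cast (Step.eps hl hj u) (by omega) (by omega)

lemma star_step_exit (M : Acceptor α) (u : List α) :
    Step (star M) (2, u) ((M.length:ℤ)+3, u) := by
  have hl : 1 < (star M).length := by rw [star_length]; omega
  have hj : ((M.length:ℤ)+1) ∈ ((star M).get ⟨1, hl⟩).1 := by
    simp only [List.get_eq_getElem]
    rcases Nat.eq_zero_or_pos M.length with h0 | h0
    · rw [star_getElem_last' M 1 (by omega), if_pos h0, h0]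
      norm_num
    · rw [star_getElem_mid' M 1 0 rfl (by omega), if_pos rfl]
      exact Finset.mem_insert_self _ _
  exact step_cast (Step.eps hl hj u) (by norm_num) (by omega)

lemma star_step_embed {M : Acceptor α} {p q : ℤ} {u v : List α}
    (hs : Step M (p, u) (q, v)) : Step (star M) (p + 1, u) (q + 1, v) := by
  cases hs with
  | @eps i hi j hj w =>
    have hl : i + 1 < (star M).length := by rw [star_length]; omega
    have hj' : j ∈ ((star M).get ⟨i + 1, hl⟩).1 := by
      simp only [List.get_eq_getElem, star_getElem_mid M i hi]
      rcases Nat.eq_zero_or_pos i with h0 | h0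
      · subst h0; rw [if_pos rfl]
        exact Finset.mem_insert_of_mem (by simp only [List.get_eq_getElem] at hj ⊢; exact hj)
      · rw [if_neg (by omega)]; simp only [List.get_eq_getElem] at hj ⊢; exact hj
    exact step_cast (Step.eps hl hj' u) (by omega) (by omega)
  | @symb i hi σ j hj w =>
    have hl : i + 1 < (star M).length := by rw [star_length]; omega
    have hsnd : ((star M).get ⟨i + 1, hl⟩).2 = (M.get ⟨i, hi⟩).2 := by
      simp [List.get_eq_getElem, star_getElem_mid M i hi]
    have hj' : ((star M).get ⟨i + 1, hl⟩).2.leVal σ = some j := by rw [hsnd]; exact hj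
    exact step_cast (Step.symb hl hj' u) (by omega) (by omega)

lemma step_bounds {M : Acceptor α} (h : Valid M) {p q : ℤ} {u v : List α}
    (hs : Step M (p, u) (q, v)) :
    1 ≤ p ∧ p ≤ M.length ∧ 2 ≤ q ∧ q ≤ (M.length:ℤ) + 1 := by
  cases hs with
  | @eps i hi j hj w =>
    have := (h i hi).1 j hj
    refine ⟨by omega, by omega, by omega, by omega⟩
  | @symb i hi σ j hj w =>
    have hm := BorderFun.leVal_mem (M.get ⟨i, hi⟩).2 σ
    rw [hj] at hm
    have := (h i hi).2 _ hm j rfl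
    refine ⟨by omega, by omega, by omega, by omega⟩

lemma star_step_cases {M : Acceptor α} {c c' : ℤ × List α} (hs : Step (star M) c c') :
    (c.1 = 1 ∧ c'.1 = 2 ∧ c'.2 = c.2) ∨
    (c.1 = 2 ∧ c'.1 = (M.length:ℤ) + 3 ∧ c'.2 = c.2) ∨
    (c.1 = (M.length:ℤ) + 2 ∧ c'.1 = 2 ∧ c'.2 = c.2) ∨
    (2 ≤ c.1 ∧ c.1 ≤ (M.length:ℤ) + 1 ∧ Step M (c.1 - 1, c.2) (c'.1 - 1, c'.2)) := by
  obtain ⟨s, u⟩ := c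
  obtain ⟨s', u'⟩ := c'
  cases hs with
  | @eps i hi j hj w =>
    have hlen : i < M.length + 2 := by rw [star_length] at hi; exact hi
    rcases Nat.eq_zero_or_pos i with h0 | h0
    · subst h0
      rw [List.get_eq_getElem] at hj
      rw [star_getElem_zero] at hj
      simp at hj
      subst hj
      exact Or.inl ⟨by norm_num, by norm_num, rfl⟩
    · rcases Nat.lt_or_ge i (M.length + 1) with hiN | hiN
      · -- 1 ≤ i ≤ M.length : M state
        obtain ⟨k, rfl⟩ : ∃ k, i = k + 1 := ⟨i - 1, by omega⟩
        have hk : k < M.length := by omega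
        rw [List.get_eq_getElem, star_getElem_mid M k hk] at hj
        rcases Nat.eq_zero_or_pos k with hk0 | hk0
        · subst hk0
          rw [if_pos rfl, Finset.mem_insert] at hj
          rcases hj with hj | hj
          · subst hj
            exact Or.inr (Or.inl ⟨by norm_num, by omega, rfl⟩)
          · refine Or.inr (Or.inr (Or.inr ⟨by norm_num, by omega, ?_⟩))
            exact step_cast (Step.eps hk (by simp only [List.get_eq_getElem] at hj ⊢; exact hj) u)
              (by omega) (by omega)
        · rw [if_neg (by omega)] at hj
          refine Or.inr (Or.inr (Or.inr ⟨by omega, by omega, ?_⟩))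
          exact step_cast (Step.eps hk (by simp only [List.get_eq_getElem] at hj ⊢; exact hj) u)
            (by omega) (by omega)
      · -- i = M.length + 1 : final empty state
        have hi' : i = M.length + 1 := by omega
        subst hi'
        rw [List.get_eq_getElem, star_getElem_last] at hj
        rcases Nat.eq_zero_or_pos M.length with h0 | h0
        · rw [if_pos h0] at hj
          simp only [Finset.mem_insert, Finset.mem_singleton] at hj
          rcases hj with hj | hj <;> subst hj
          · exact Or.inr (Or.inr (Or.inl ⟨by omega, by omega, rfl⟩))
          · exact Or.inr (Or.inl ⟨by omega, by omega, rfl⟩)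
        · rw [if_neg (by omega), Finset.mem_singleton] at hj
          subst hj
          exact Or.inr (Or.inr (Or.inl ⟨by omega, by omega, rfl⟩))
  | @symb i hi σ j hj w =>
    have hlen : i < M.length + 2 := by rw [star_length] at hi; exact hi
    rcases Nat.eq_zero_or_pos i with h0 | h0
    · subst h0
      rw [List.get_eq_getElem, star_getElem_zero] at hj
      rw [BorderFun.botFun_leVal] at hj
      exact absurd hj (by simp)
    · rcases Nat.lt_or_ge i (M.length + 1) with hiN | hiN
      · obtain ⟨k, rfl⟩ : ∃ k, i = k + 1 := ⟨i - 1, by omega⟩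
        have hk : k < M.length := by omega
        rw [List.get_eq_getElem, star_getElem_mid M k hk] at hj
        refine Or.inr (Or.inr (Or.inr ⟨by omega, by omega, ?_⟩))
        exact step_cast (Step.symb hk (by simp only [List.get_eq_getElem] at hj ⊢; exact hj) u)
          (by omega) (by omega)
      · have hi' : i = M.length + 1 := by omega
        subst hi'
        rw [List.get_eq_getElem, star_getElem_last] at hj
        have : (if M.length = 0 then ({(0:ℤ), 1} : Finset ℤ) else {-(M.length:ℤ)},
            BorderFun.botFun (α := α) (Option.none (α := ℤ))).2.leVal σ = none :=
          BorderFun.botFun_leVal _ _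
        rw [this] at hj
        exact absurd hj (by simp)
end Acceptor

namespace Acceptor
variable {α : Type*} [LinearOrder α] [OrderBot α]

lemma rtg_embed {M : Acceptor α} :
    ∀ {c d : ℤ × List α}, ReflTransGen (Step M) c d →
      ReflTransGen (Step (star M)) (c.1 + 1, c.2) (d.1 + 1, d.2) := by
  intro c d hcd
  induction hcd with
  | refl => exact .refl
  | tail _ hstep ih => exact ih.tail (star_step_embed hstep)

lemma accepts_to_star {M : Acceptor α} {v : List α} (u : List α) (hacc : Accepts M v) :
    ReflTransGen (Step (star M)) (2, u) (2, u ++ v) := by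
  have h1 : ReflTransGen (Step M) (1, u ++ []) ((M.length:ℤ)+1, u ++ v) := rtg_shift (x := u) hacc
  rw [List.append_nil] at h1
  have h2 := rtg_embed h1
  simp only at h2
  have h3 : ReflTransGen (Step (star M)) (2, u) ((M.length:ℤ)+1+1, u ++ v) := by
    have e : (1:ℤ) + 1 = 2 := by norm_num
    rwa [e] at h2
  refine h3.tail ?_
  exact step_cast (star_step_loop M (u ++ v)) (by omega) rfl

lemma star_loop {M : Acceptor α} (ws : List (List α)) (hws : ∀ v ∈ ws, Accepts M v) :
    ∀ u, ReflTransGen (Step (star M)) (2, u) (2, u ++ ws.flatten) := by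
  induction ws with
  | nil => intro u; rw [List.flatten_nil, List.append_nil]
  | cons v ws ih =>
    intro u
    have h1 := accepts_to_star u (hws v (by simp))
    have h2 := ih (fun x hx => hws x (by simp [hx])) (u ++ v)
    have := h1.trans h2
    simpa [List.append_assoc] using this

lemma star_decomp {M : Acceptor α} (h : Valid M) {W : List α} :
    ∀ {c : ℤ × List α}, ReflTransGen (Step (star M)) c ((M.length:ℤ)+3, W) →
    ((c.1 = 1 ∨ c.1 = 2 ∨ c.1 = (M.length:ℤ)+2) →
       ∃ ws : List (List α), (∀ u ∈ ws, Accepts M u) ∧ W = c.2 ++ ws.flatten) ∧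
    ((3 ≤ c.1 ∧ c.1 ≤ (M.length:ℤ)+1) →
       ∃ (v : List α) (ws : List (List α)), ReflTransGen (Step M) (c.1 - 1, []) ((M.length:ℤ)+1, v) ∧
         (∀ u ∈ ws, Accepts M u) ∧ W = c.2 ++ v ++ ws.flatten) ∧
    (c.1 = (M.length:ℤ)+3 → W = c.2) := by
  intro c hrun
  induction hrun using Relation.ReflTransGen.head_induction_on with
  | refl =>
    refine ⟨fun h1 => ?_, fun h2 => ?_, fun _ => rfl⟩
    · exfalso; rcases h1 with h1 | h1 | h1 <;> simp only at h1 <;> omega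
    · exfalso; simp only at h2; omega
  | head hstep hrest ih =>
    rename_i a c'
    rcases star_step_cases hstep with ⟨ha, hc, he⟩ | ⟨ha, hc, he⟩ | ⟨ha, hc, he⟩ |
      ⟨ha2, haN, hstepM⟩
    · -- a.1 = 1 → c'.1 = 2
      refine ⟨fun _ => ?_, fun h2 => by omega, fun h3 => by omega⟩
      obtain ⟨ws, hws, hW⟩ := ih.1 (Or.inr (Or.inl hc))
      exact ⟨ws, hws, by rw [hW, he]⟩
    · -- a.1 = 2 → c'.1 = N+3 (exit)
      refine ⟨fun _ => ?_, fun h2 => by omega, fun h3 => by omega⟩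
      have hW := ih.2.2 hc
      exact ⟨[], by simp, by simp [hW, he]⟩
    · -- a.1 = N+2 → c'.1 = 2 (loop back)
      refine ⟨fun _ => ?_, fun h2 => by omega, fun h3 => by omega⟩
      obtain ⟨ws, hws, hW⟩ := ih.1 (Or.inr (Or.inl hc))
      exact ⟨ws, hws, by rw [hW, he]⟩
    · -- M-step
      obtain ⟨hp1, hpN, hq2, hqN⟩ := step_bounds h hstepM
      obtain ⟨d, hd, hstepAll⟩ := step_drop hstepM
      -- get a combined run from (a.1 - 1, []) to (N+1, v') with the remainder
      have key : ∃ (v : List α) (ws : List (List α)), ReflTransGen (Step M) (a.1 - 1, []) ((M.length:ℤ)+1, v) ∧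
          (∀ u ∈ ws, Accepts M u) ∧ W = a.2 ++ v ++ ws.flatten := by
        rcases eq_or_lt_of_le hqN with hlast | hmid
        · -- c'.1 - 1 = N+1 : the step finishes an M-run
          obtain ⟨ws, hws, hW⟩ := ih.1 (Or.inr (Or.inr (by omega)))
          refine ⟨d, ws, ?_, hws, ?_⟩
          · have := hstepAll []
            rw [List.nil_append] at this
            exact ReflTransGen.single (step_cast this rfl (by omega))
          · rw [hW, hd, List.append_assoc]
        · -- c'.1 - 1 ≤ N : still inside M
          obtain ⟨v, ws, hrunM, hws, hW⟩ := ih.2.1 ⟨by omega, by omega⟩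
          refine ⟨d ++ v, ws, ?_, hws, ?_⟩
          · have s1 : Step M (a.1 - 1, []) (c'.1 - 1, d) := by
              have := hstepAll []
              rwa [List.nil_append] at this
            have s2 : ReflTransGen (Step M) (c'.1 - 1, d ++ []) ((M.length:ℤ)+1, d ++ v) :=
              rtg_shift (x := d) hrunM
            rw [List.append_nil] at s2
            exact (ReflTransGen.single s1).trans s2
          · rw [hW, hd]
            simp [List.append_assoc]
      obtain ⟨v, ws, hrunM, hws, hW⟩ := key
      refine ⟨fun h1 => ?_, fun h2 => ⟨v, ws, hrunM, hws, hW⟩, fun h3 => by omega⟩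
      have ha2' : a.1 = 2 := by rcases h1 with h1 | h1 | h1 <;> omega
      refine ⟨v :: ws, ?_, ?_⟩
      · intro x hx
        rcases List.mem_cons.mp hx with rfl | hx
        · have : a.1 - 1 = 1 := by omega
          rw [this] at hrunM
          exact hrunM
        · exact hws x hx
      · rw [hW]
        simp [List.append_assoc]

end Acceptor


/-- `w ∈ L(A*)` iff `w` is a concatenation `w₁⋯w_k` (`k ≥ 0`) of
words `w₁, …, w_k ∈ L(A)`. -/
theorem star_lang {α : Type*} [LinearOrder α] [OrderBot α]
    (M : Acceptor α) (h : Acceptor.Valid M) (w : List α) :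
    w ∈ Acceptor.Lang (Acceptor.star M) ↔
      ∃ ws : List (List α), (∀ u ∈ ws, u ∈ Acceptor.Lang M) ∧ w = ws.flatten := by
  have hlen : ((Acceptor.star M).length : ℤ) + 1 = (M.length : ℤ) + 3 := by
    rw [Acceptor.star_length]; push_cast; ring
  constructor
  · intro hw
    have hrun : Relation.ReflTransGen (Acceptor.Step (Acceptor.star M)) (1, [])
        ((M.length : ℤ) + 3, w) := by
      have h0 : Acceptor.Accepts (Acceptor.star M) w := hw
      unfold Acceptor.Accepts at h0
      rwa [hlen] at h0
    obtain ⟨ws, hws, hW⟩ := (Acceptor.star_decomp h hrun).1 (Or.inl rfl)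
    exact ⟨ws, hws, by simpa using hW⟩
  · rintro ⟨ws, hws, rfl⟩
    show Acceptor.Accepts _ _
    unfold Acceptor.Accepts
    rw [hlen]
    have h1 : Relation.ReflTransGen (Acceptor.Step (Acceptor.star M)) (1, []) (2, []) :=
      Relation.ReflTransGen.single (Acceptor.star_step_init M [])
    have h2 := Acceptor.star_loop ws hws []
    rw [List.nil_append] at h2
    exact (h1.trans h2).tail (Acceptor.star_step_exit M _)
end

section
/- For every committing acceptor A, the optional acceptor A? := A{1 →^ε ‖A‖+1} satisfies L(A?) = L(A) ∪ {ε}. -/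
section OptProof
open Acceptor

variable {α : Type*} [LinearOrder α] [OrderBot α]

lemma opt_nil : (Acceptor.opt ([] : Acceptor α)) = [] := by
  simp [Acceptor.opt, Acceptor.addEps, List.modify, List.modifyTailIdx, List.modifyTailIdx.go]

lemma opt_cons (p : Finset ℤ × BorderFun α (Option ℤ)) (rest : Acceptor α) :
    Acceptor.opt (p :: rest) =
      (insert (((p :: rest).length : ℕ) : ℤ) p.1, p.2) :: rest := by
  simp [Acceptor.opt, Acceptor.addEps, List.modify, List.modifyTailIdx, List.modifyTailIdx.go, List.modifyHead]

lemma step_nil_false (c d : ℤ × List α) : ¬ Acceptor.Step ([] : Acceptor α) c d := by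
  intro h
  cases h with
  | eps hi _ _ => exact absurd hi (by simp)
  | symb hi _ _ => exact absurd hi (by simp)

/-- committing: every step of M goes to a state ≥ 2 and stays within bounds -/
lemma step_target_ge_two {M : Acceptor α} (h : Acceptor.Valid M) {c d : ℤ × List α}
    (hs : Acceptor.Step M c d) : 2 ≤ d.1 := by
  cases hs with
  | eps hi hj w =>
    exact ((h _ hi).1 _ hj).1
  | symb hi hj w =>
    rename_i i σ j
    have hmem : ((M.get ⟨i, hi⟩).2.maxLe σ, (M.get ⟨i, hi⟩).2.leVal σ) ∈ (M.get ⟨i, hi⟩).2.graph :=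
      Classical.choose_spec ((M.get ⟨i, hi⟩).2.exists_leVal σ)
    rw [hj] at hmem
    exact ((h _ hi).2 _ hmem j rfl).1

-- For M = p :: rest, name the opt acceptor
variable {p : Finset ℤ × BorderFun α (Option ℤ)} {rest : Acceptor α}

lemma step_opt_of_step {M : Acceptor α} {c d : ℤ × List α}
    (hs : Acceptor.Step M c d) : Acceptor.Step (Acceptor.opt M) c d := by
  cases M with
  | nil => exact absurd hs (step_nil_false _ _)
  | cons p rest =>
    rw [opt_cons]
    cases hs with
    | eps hi hj w =>
      rename_i i j
      refine Acceptor.Step.eps (M := (insert (((p :: rest).length : ℕ) : ℤ) p.1, p.2) :: rest)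
        (i := i) (by simpa using hi) ?_ w
      rcases i with _ | i
      · simpa using Or.inr hj
      · simpa using hj
    | symb hi hj w =>
      rename_i i σ j
      refine Acceptor.Step.symb (M := (insert (((p :: rest).length : ℕ) : ℤ) p.1, p.2) :: rest)
        (i := i) (by simpa using hi) ?_ w
      rcases i with _ | i
      · simpa using hj
      · simpa using hj

lemma step_opt_cases {M : Acceptor α} {c d : ℤ × List α}
    (hs : Acceptor.Step (Acceptor.opt M) c d) :
    Acceptor.Step M c d ∨ (c.1 = 1 ∧ d = ((M.length : ℤ) + 1, c.2)) := by
  cases M with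
  | nil => rw [opt_nil] at hs; exact absurd hs (step_nil_false _ _)
  | cons p rest =>
    rw [opt_cons] at hs
    cases hs with
    | eps hi hj w =>
      rename_i i j
      have hi' : i < (p :: rest).length := by simpa using hi
      rcases i with _ | i
      · simp only [List.get] at hj
        rcases Finset.mem_insert.mp hj with h1 | h1
        · subst h1
          right
          constructor
          · simp
          · simp [add_comm]
        · exact Or.inl (Acceptor.Step.eps (M := p :: rest) (i := 0) hi' h1 w)
      · exact Or.inl (Acceptor.Step.eps (M := p :: rest) (i := i + 1) hi' (by simpa using hj) w)
    | symb hi hj w =>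
      rename_i i σ j
      have hi' : i < (p :: rest).length := by simpa using hi
      left
      rcases i with _ | i
      · exact Acceptor.Step.symb (M := p :: rest) (i := 0) hi' (by simpa using hj) w
      · exact Acceptor.Step.symb (M := p :: rest) (i := i + 1) hi' (by simpa using hj) w

lemma step_state_le {M : Acceptor α} {c d : ℤ × List α}
    (hs : Acceptor.Step M c d) : c.1 ≤ (M.length : ℤ) := by
  cases hs with
  | eps hi hj w => rename_i i j; simp; omega
  | symb hi hj w => rename_i i σ j; simp; omega

lemma rtg_from_final {M : Acceptor α} {c d : ℤ × List α}
    (hc : c.1 = (M.length : ℤ) + 1)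
    (hs : Relation.ReflTransGen (Acceptor.Step M) c d) : d = c := by
  rcases Relation.ReflTransGen.cases_head hs with h | ⟨e, he, _⟩
  · exact h.symm
  · exfalso; have := step_state_le he; omega

lemma rtg_opt_of_ge_two {M : Acceptor α} (h : Acceptor.Valid M) {c d : ℤ × List α}
    (hr : Relation.ReflTransGen (Acceptor.Step (Acceptor.opt M)) c d) (hc : 2 ≤ c.1) :
    Relation.ReflTransGen (Acceptor.Step M) c d := by
  induction hr using Relation.ReflTransGen.head_induction_on with
  | refl => exact Relation.ReflTransGen.refl
  | head hs _ ih =>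
    rename_i a b _
    rcases step_opt_cases hs with hM | ⟨h1, _⟩
    · exact Relation.ReflTransGen.head hM (ih (step_target_ge_two h hM))
    · omega

theorem opt_lang' (M : Acceptor α) (h : Acceptor.Valid M) :
    Acceptor.Lang (Acceptor.opt M) = Acceptor.Lang M ∪ {([] : List α)} := by
  cases M with
  | nil =>
    rw [opt_nil]
    ext w
    simp only [Set.mem_union, Set.mem_singleton_iff, Acceptor.Lang, Acceptor.Accepts,
      Set.mem_setOf_eq]
    constructor
    · intro hw
      right
      rcases Relation.ReflTransGen.cases_head hw with heq | ⟨c, hc, _⟩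
      · simp at heq; tauto
      · exact absurd hc (step_nil_false _ _)
    · rintro (hw | rfl)
      · exact hw
      · simp; exact Relation.ReflTransGen.refl
  | cons p rest =>
    set M := p :: rest with hM
    have hlen : ((Acceptor.opt M).length : ℤ) = (M.length : ℤ) := by
      rw [opt_cons]; simp [hM]
    ext w
    simp only [Set.mem_union, Set.mem_singleton_iff, Acceptor.Lang, Acceptor.Accepts,
      Set.mem_setOf_eq]
    constructor
    · intro hw
      rw [hlen] at hw
      rcases Relation.ReflTransGen.cases_head hw with heq | ⟨c, hc, hrest⟩
      · exfalso
        have : (1 : ℤ) = (M.length : ℤ) + 1 := congrArg Prod.fst heq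
        have : (0:ℤ) < (M.length : ℤ) := by simp [hM]
        omega
      · rcases step_opt_cases hc with hMstep | ⟨h1, h2⟩
        · left
          exact Relation.ReflTransGen.head hMstep
            (rtg_opt_of_ge_two h hrest (step_target_ge_two h hMstep))
        · right
          rw [h2] at hrest
          have := rtg_from_final (M := Acceptor.opt M) (by simp [hlen]) hrest
          simpa using (congrArg Prod.snd this)
    · rintro (hw | rfl)
      · rw [hlen]
        exact Relation.ReflTransGen.mono (fun _ _ => step_opt_of_step) _ _ hw
      · rw [hlen, hM, opt_cons]
        refine Relation.ReflTransGen.single ?_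
        have hstep := Acceptor.Step.eps
          (M := (insert (((p :: rest).length : ℕ) : ℤ) p.1, p.2) :: rest) (i := 0)
          (by simp) (j := ((p :: rest).length : ℤ)) (by simp) []
        simpa [add_comm] using hstep

end OptProof

/-- For every committing acceptor `A`, the optional acceptor
`A? := A{1 →^ε ‖A‖+1}` satisfies `L(A?) = L(A) ∪ {ε}`. -/
theorem opt_lang {α : Type*} [LinearOrder α] [OrderBot α]
    (M : Acceptor α) (h : Acceptor.Valid M) :
    Acceptor.Lang (Acceptor.opt M) = Acceptor.Lang M ∪ {([] : List α)} := by
  exact opt_lang' M h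
end

section
/- Let C be a well-formed nondeterministic classifier and C_det the deterministic classifier obtained from C by the subset-construction determinization procedure using ε-closures, borders, and CLASS. Then for every word w ∈ Σ*, if C classifies w as (w', t') and C_det classifies w as (w'', t''), then w' = w'' and t' = t''. -/
/-- A classifier: a flat list of states, each with relative ε-transitions,
a border function giving relative symbol transitions (`none` = `#`), and a
token class. State `1` carries the error class `t₁`. -/
abbrev Classifier (α : Type*) [LinearOrder α] [OrderBot α] (T : Type*) :=
  List (Finset ℤ × BorderFun α (Option ℤ) × T)

namespace Classifier

variable {α : Type*} [LinearOrder α] [OrderBot α] {T : Type*}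

/-- `TokOf C i t`: state `i` (1-indexed) exists and carries token `t`. -/
def TokOf (C : Classifier α T) (i : ℤ) (t : T) : Prop :=
  ∃ h : (i - 1).toNat < C.length, 1 ≤ i ∧ (C.get ⟨(i - 1).toNat, h⟩).2.2 = t

/-- An ε-transition from state `a` to state `b`. -/
def EpsStep (C : Classifier α T) (a b : ℤ) : Prop :=
  ∃ h : (a - 1).toNat < C.length, 1 ≤ a ∧ b - a ∈ (C.get ⟨(a - 1).toNat, h⟩).1

/-- A symbol transition on `σ` from state `a` to state `b`. -/
def SymStep (C : Classifier α T) (σ : α) (a b : ℤ) : Prop :=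
  ∃ h : (a - 1).toNat < C.length,
    1 ≤ a ∧ (C.get ⟨(a - 1).toNat, h⟩).2.1.leVal σ = some (b - a)

/-- The transition relation on configurations `(state, word read so far)`. -/
def Step (C : Classifier α T) : ℤ × List α → ℤ × List α → Prop := fun p q =>
  (EpsStep C p.1 q.1 ∧ q.2 = p.2) ∨ (∃ σ, SymStep C σ p.1 q.1 ∧ q.2 = p.2 ++ [σ])

/-- `Reach C i w`: `(1, ε) ⊢* (i, w)`. -/
def Reach (C : Classifier α T) (i : ℤ) (w : List α) : Prop :=
  Relation.ReflTransGen (Step C) (1, []) (i, w)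

/-- A classifier is well-formed if no state reachable on the empty word carries a
token different from the error class `t₁`. -/
def WellFormed (C : Classifier α T) : Prop :=
  ∀ i t t₁, Reach C i [] → TokOf C i t → TokOf C 1 t₁ → t = t₁

/-- `ClassifiesAs C w w' t`: the classification of `w` by `C` is the pair `(w', t)`:
either no prefix of `w` reaches a non-error state, and then `w' = ε` and `t = t₁`;
or `w'` is the maximal prefix of `w` reaching a state with non-error token, and `t`
is the token of the largest such state. -/
def ClassifiesAs (C : Classifier α T) (w w' : List α) (t : T) : Prop :=
  (w' = [] ∧ TokOf C 1 t ∧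
    ∀ p i ti t1, p <+: w → Reach C i p → TokOf C i ti → TokOf C 1 t1 → ti = t1) ∨
  (w' <+: w ∧ ∃ i t1, TokOf C 1 t1 ∧ Reach C i w' ∧ TokOf C i t ∧ t ≠ t1 ∧
    (∀ j tj, Reach C j w' → TokOf C j tj → tj ≠ t1 → j ≤ i) ∧
    (∀ p j tj t1', p <+: w → w'.length < p.length →
      Reach C j p → TokOf C j tj → TokOf C 1 t1' → tj = t1'))

/-- The ε-closure of a set of states. -/
def Clos (C : Classifier α T) (S : Set ℤ) : Set ℤ :=
  {j | ∃ i ∈ S, Relation.ReflTransGen (EpsStep C) i j}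

/-- `ClassOf C S t`: `t = CLASS(S)`, i.e. `t = t₁` if every state of `S` carries the
error token, and otherwise `t` is the token of the maximal state of `S` whose token
differs from `t₁`. -/
def ClassOf (C : Classifier α T) (S : Set ℤ) (t : T) : Prop :=
  ((∀ i ∈ S, ∀ ti t1, TokOf C i ti → TokOf C 1 t1 → ti = t1) ∧ TokOf C 1 t) ∨
  (∃ i ∈ S, TokOf C i t ∧ (∀ t1, TokOf C 1 t1 → t ≠ t1) ∧
    ∀ j ∈ S, ∀ tj t1, TokOf C j tj → TokOf C 1 t1 → tj ≠ t1 → j ≤ i)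

/-- The set of successor states of `S` on symbol `σ`. -/
def NextSet (C : Classifier α T) (S : Set ℤ) (σ : α) : Set ℤ :=
  {b | ∃ a ∈ S, SymStep C σ a b}

/-- `IsDeterminization C Cd S`: `Cd` is the deterministic classifier produced from `C`
by the subset construction, where `S k` is the subset of states of `C` associated with
state `k` of `Cd` (so `H` is the inverse of `S`):
`S 1 = CLOS({1})`; `S` is injective on states; `Cd` has no ε-transitions; the token
of state `k` of `Cd` is `CLASS(S k)`; and the transition of state `k` on `σ` is `#`
if the successor set is empty, and otherwise leads to the state associated with the
ε-closure of the successor set. -/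
def IsDeterminization (C Cd : Classifier α T) (S : ℕ → Set ℤ) : Prop :=
  1 ≤ Cd.length ∧
  S 1 = Clos C {1} ∧
  (∀ i j, 1 ≤ i → i ≤ Cd.length → 1 ≤ j → j ≤ Cd.length → S i = S j → i = j) ∧
  (∀ i (h : i < Cd.length), (Cd.get ⟨i, h⟩).1 = ∅) ∧
  (∀ i (h : i < Cd.length), ClassOf C (S (i + 1)) (Cd.get ⟨i, h⟩).2.2) ∧
  (∀ i (h : i < Cd.length) (σ : α),
    (NextSet C (S (i + 1)) σ = ∅ → (Cd.get ⟨i, h⟩).2.1.leVal σ = none) ∧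
    (NextSet C (S (i + 1)) σ ≠ ∅ →
      ∃ k : ℕ, 1 ≤ k ∧ k ≤ Cd.length ∧ S k = Clos C (NextSet C (S (i + 1)) σ) ∧
        (Cd.get ⟨i, h⟩).2.1.leVal σ = some ((k : ℤ) - ((i : ℤ) + 1))))

end Classifier

namespace DetProof
open Classifier

variable {α : Type*} [LinearOrder α] [OrderBot α] {T : Type*}

lemma tokOf_fun {C : Classifier α T} {i : ℤ} {t t' : T}
    (h : C.TokOf i t) (h' : C.TokOf i t') : t = t' := by
  obtain ⟨h1, _, rfl⟩ := h; obtain ⟨h2, _, rfl⟩ := h'; rfl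

lemma tokOf_one_exists (C : Classifier α T) (hC : C ≠ []) : ∃ t, C.TokOf 1 t := by
  have hl : 0 < C.length := List.length_pos_iff.mpr hC
  exact ⟨_, ⟨by simpa using hl, le_refl 1, rfl⟩⟩

lemma reach_aux (C : Classifier α T) {x : ℤ × List α}
    (h : Relation.ReflTransGen (Step C) (1, []) x) :
    (x.2 = [] → Relation.ReflTransGen (EpsStep C) 1 x.1) ∧
    (∀ p σ, x.2 = p ++ [σ] → ∃ j b, C.Reach j p ∧ C.SymStep σ j b ∧
      Relation.ReflTransGen (EpsStep C) b x.1) := by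
  induction h with
  | refl =>
    refine ⟨fun _ => .refl, fun p σ hp => ?_⟩
    simp at hp
  | @tail b c h1 h2 ih =>
    obtain ⟨ihe, ihs⟩ := ih
    rcases h2 with ⟨he, hw⟩ | ⟨σ', hs, hw⟩
    · constructor
      · intro h0
        rw [h0] at hw
        exact (ihe hw.symm).tail he
      · intro p σ hp
        rw [hp] at hw
        obtain ⟨j, b', hr, hss, hcl⟩ := ihs p σ hw.symm
        exact ⟨j, b', hr, hss, hcl.tail he⟩
    · constructor
      · intro h0; rw [h0] at hw; simp at hw
      · intro p σ hp
        rw [hp] at hw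
        obtain ⟨hb2, hσ⟩ := List.append_inj' hw.symm rfl
        have hσ' : σ' = σ := by simpa using hσ
        refine ⟨b.1, c.1, ?_, ?_, .refl⟩
        · rw [← hb2]; exact h1
        · rw [← hσ']; exact hs

lemma reach_eps {C : Classifier α T} {i j : ℤ} {w : List α}
    (h : C.Reach i w) (hc : Relation.ReflTransGen (EpsStep C) i j) : C.Reach j w := by
  induction hc with
  | refl => exact h
  | tail _ he ih => exact ih.tail (Or.inl ⟨he, rfl⟩)

lemma reach_snoc_intro {C : Classifier α T} {j b : ℤ} {p : List α} {σ : α}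
    (h : C.Reach j p) (hs : C.SymStep σ j b) : C.Reach b (p ++ [σ]) :=
  h.tail (Or.inr ⟨σ, hs, rfl⟩)

/-- The set of states of `C` reachable on word `p`. -/
def RS (C : Classifier α T) (p : List α) : Set ℤ := {i | C.Reach i p}

lemma RS_nil (C : Classifier α T) : RS C [] = Clos C {1} := by
  ext j
  constructor
  · intro h; exact ⟨1, rfl, (reach_aux C h).1 rfl⟩
  · rintro ⟨i, hi, hcl⟩
    rcases hi with rfl
    exact reach_eps .refl hcl

lemma RS_snoc (C : Classifier α T) (p : List α) (σ : α) :
    RS C (p ++ [σ]) = Clos C (NextSet C (RS C p) σ) := by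
  ext k
  constructor
  · intro h
    obtain ⟨j, b, hr, hss, hcl⟩ := (reach_aux C h).2 p σ rfl
    exact ⟨b, ⟨j, hr, hss⟩, hcl⟩
  · rintro ⟨b, ⟨a, ha, hss⟩, hcl⟩
    exact reach_eps (reach_snoc_intro ha hss) hcl

end DetProof
namespace DetProof
open Classifier

variable {α : Type*} [LinearOrder α] [OrderBot α] {T : Type*}

section Det

variable {C Cd : Classifier α T} {S : ℕ → Set ℤ}

lemma cd_no_eps (hdet : IsDeterminization C Cd S) {a b : ℤ} (h : EpsStep Cd a b) : False := by
  obtain ⟨hlt, _, hmem⟩ := h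
  rw [hdet.2.2.2.1 _ hlt] at hmem
  exact absurd hmem (Finset.notMem_empty _)

lemma cd_closure_eq (hdet : IsDeterminization C Cd S) {a b : ℤ}
    (h : Relation.ReflTransGen (EpsStep Cd) a b) : a = b := by
  induction h with
  | refl => rfl
  | tail _ he _ => exact absurd he (cd_no_eps hdet)

lemma main_inv (hdet : IsDeterminization C Cd S) (p : List α) :
    (∀ k : ℤ, Cd.Reach k p → ∃ n : ℕ, k = (n : ℤ) ∧ 1 ≤ n ∧ n ≤ Cd.length ∧
      S n = RS C p ∧ (RS C p).Nonempty) ∧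
    ((RS C p).Nonempty → ∃ k : ℤ, Cd.Reach k p) := by
  obtain ⟨hlen, hS1, hinj, heps, hcls, htr⟩ := hdet
  induction p using List.reverseRecOn with
  | nil =>
    constructor
    · intro k hk
      have h1 : k = 1 := (cd_closure_eq ⟨hlen, hS1, hinj, heps, hcls, htr⟩
        ((reach_aux Cd hk).1 rfl)).symm
      refine ⟨1, by simpa using h1, le_refl 1, hlen, ?_, ⟨1, Relation.ReflTransGen.refl⟩⟩
      rw [hS1, RS_nil]
    · intro _; exact ⟨1, Relation.ReflTransGen.refl⟩
  | append_singleton q σ ih =>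
    obtain ⟨iha, ihb⟩ := ih
    have key : ∀ (n' : ℕ), 1 ≤ n' → n' ≤ Cd.length → S n' = RS C q →
        (RS C (q ++ [σ])).Nonempty →
        ∃ m : ℕ, 1 ≤ m ∧ m ≤ Cd.length ∧ S m = RS C (q ++ [σ]) ∧
          ∀ (h : (((n' : ℤ)) - 1).toNat < Cd.length),
            (Cd.get ⟨(((n' : ℤ)) - 1).toNat, h⟩).2.1.leVal σ = some ((m : ℤ) - (n' : ℤ)) := by
      intro n' hn1 hn2 hSn hne
      have hidx : (((n' : ℤ)) - 1).toNat = n' - 1 := by omega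
      have hlt : n' - 1 < Cd.length := by omega
      have hNE : NextSet C (S n') σ ≠ ∅ := by
        rw [hSn]
        intro hcon
        rw [RS_snoc] at hne
        obtain ⟨x, b, hb, _⟩ := hne
        rw [hcon] at hb
        exact hb
      have hsucc : n' - 1 + 1 = n' := by omega
      have hh := (htr (n' - 1) hlt σ).2
      rw [hsucc] at hh
      obtain ⟨m, hm1, hm2, hSm, hval⟩ := hh hNE
      refine ⟨m, hm1, hm2, ?_, ?_⟩
      · rw [hSm, hSn, RS_snoc]
      · intro h
        have : (⟨(((n' : ℤ)) - 1).toNat, h⟩ : Fin Cd.length) = ⟨n' - 1, hlt⟩ := by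
          simp [hidx]
        rw [this, hval]
        congr 1
        omega
    constructor
    · intro k hk
      obtain ⟨j, b, hr, hss, hcl⟩ := (reach_aux Cd hk).2 q σ rfl
      have hbk : b = k := cd_closure_eq ⟨hlen, hS1, hinj, heps, hcls, htr⟩ hcl
      obtain ⟨n', hjn, hn1, hn2, hSn, _⟩ := iha j hr
      subst hjn
      obtain ⟨hlt', _, hval'⟩ := hss
      have hlt2 : n' - 1 < Cd.length := by omega
      have hfe : (⟨(((n' : ℕ) : ℤ) - 1).toNat, hlt'⟩ : Fin Cd.length) = ⟨n' - 1, hlt2⟩ := by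
        have : (((n' : ℕ) : ℤ) - 1).toNat = n' - 1 := by omega
        simp [this]
      rw [hfe] at hval'
      have hsucc : n' - 1 + 1 = n' := by omega
      have hNE : NextSet C (S n') σ ≠ ∅ := by
        intro h0
        have h1 := (htr (n' - 1) hlt2 σ).1
        rw [hsucc] at h1
        rw [h1 h0] at hval'
        exact Option.some_ne_none _ hval'.symm
      have hne2 : (RS C (q ++ [σ])).Nonempty := by
        rw [RS_snoc]
        have hNE2 : NextSet C (RS C q) σ ≠ ∅ := by rw [← hSn]; exact hNE
        obtain ⟨b0, hb0⟩ := Set.nonempty_iff_ne_empty.mpr hNE2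
        exact ⟨b0, b0, hb0, Relation.ReflTransGen.refl⟩
      obtain ⟨m, hm1, hm2, hSm, hvm⟩ := key n' hn1 hn2 hSn hne2
      have hvm' := hvm hlt'
      rw [hfe] at hvm'
      rw [hvm'] at hval'
      have : k = (m : ℤ) := by
        have := Option.some_injective _ hval'
        omega
      exact ⟨m, this, hm1, hm2, hSm, hne2⟩
    · intro hne
      have hq : (RS C q).Nonempty := by
        rw [RS_snoc] at hne
        obtain ⟨x, b, ⟨a, ha, _⟩, _⟩ := hne
        exact ⟨a, ha⟩
      obtain ⟨k', hk'⟩ := ihb hq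
      obtain ⟨n', hjn, hn1, hn2, hSn, _⟩ := iha k' hk'
      obtain ⟨m, hm1, hm2, hSm, hvm⟩ := key n' hn1 hn2 hSn hne
      have hlt' : ((k' : ℤ) - 1).toNat < Cd.length := by
        rw [hjn]; omega
      refine ⟨m, reach_snoc_intro hk' ⟨hlt', by omega, ?_⟩⟩
      have hfe : (⟨((k' : ℤ) - 1).toNat, hlt'⟩ : Fin Cd.length)
          = ⟨(((n' : ℤ)) - 1).toNat, by omega⟩ := by
        simp [hjn]
      rw [hfe, hvm]
      congr 1
      rw [hjn]

end Det
end DetProof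
namespace DetProof
open Classifier

variable {α : Type*} [LinearOrder α] [OrderBot α] {T : Type*}

section Det2

variable {C Cd : Classifier α T} {S : ℕ → Set ℤ}

/-- Every Cd-state reachable on `p` carries a token and that token is `CLASS(RS C p)`. -/
lemma cd_token_exists (hdet : IsDeterminization C Cd S) {k : ℤ} {p : List α}
    (hr : Cd.Reach k p) :
    ∃ t, Cd.TokOf k t ∧ ClassOf C (RS C p) t := by
  obtain ⟨n, rfl, hn1, hn2, hSn, _⟩ := (main_inv hdet p).1 k hr
  have hlt2 : n - 1 < Cd.length := by omega
  have hlt : (((n : ℕ) : ℤ) - 1).toNat < Cd.length := by omega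
  have hfe : (⟨(((n : ℕ) : ℤ) - 1).toNat, hlt⟩ : Fin Cd.length) = ⟨n - 1, hlt2⟩ := by
    have : (((n : ℕ) : ℤ) - 1).toNat = n - 1 := by omega
    simp [this]
  refine ⟨(Cd.get ⟨n - 1, hlt2⟩).2.2, ⟨hlt, by omega, by rw [hfe]⟩, ?_⟩
  have h := hcls_of hdet (n - 1) hlt2
  rwa [show n - 1 + 1 = n by omega, hSn] at h
where
  hcls_of (hdet : IsDeterminization C Cd S) := hdet.2.2.2.2.1

lemma cd_tokOf_class (hdet : IsDeterminization C Cd S) {k : ℤ} {p : List α} {t : T}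
    (hr : Cd.Reach k p) (ht : Cd.TokOf k t) : ClassOf C (RS C p) t := by
  obtain ⟨t0, ht0, hcl⟩ := cd_token_exists hdet hr
  rwa [tokOf_fun ht ht0]

/-- The error token of `Cd` coincides with that of `C`. -/
lemma t1_cd (_hC : C ≠ []) (hwf : C.WellFormed) (hdet : IsDeterminization C Cd S)
    {t1 : T} (h : C.TokOf 1 t1) : Cd.TokOf 1 t1 := by
  obtain ⟨tok, htok, hcl⟩ := cd_token_exists hdet (Relation.ReflTransGen.refl :
    Cd.Reach 1 [])
  have htokt1 : tok = t1 := by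
    rcases hcl with ⟨_, h1⟩ | ⟨i, hi, hti, hne, _⟩
    · exact tokOf_fun h1 h
    · have hri : C.Reach i [] := hi
      exact absurd (hwf i tok t1 hri hti h) (hne t1 h)
  rwa [htokt1] at htok

lemma errCd_of_errC (hC : C ≠ []) (hwf : C.WellFormed) (hdet : IsDeterminization C Cd S)
    {t1C : T} (ht1 : C.TokOf 1 t1C) {p : List α}
    (hE : ∀ i ti t1, C.Reach i p → C.TokOf i ti → C.TokOf 1 t1 → ti = t1) :
    ∀ k tk t1, Cd.Reach k p → Cd.TokOf k tk → Cd.TokOf 1 t1 → tk = t1 := by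
  intro k tk t1 hr htk ht1'
  have ht1e : t1 = t1C := tokOf_fun ht1' (t1_cd hC hwf hdet ht1)
  rw [ht1e]
  rcases cd_tokOf_class hdet hr htk with ⟨_, h1⟩ | ⟨i, hi, hti, hne, _⟩
  · exact tokOf_fun h1 ht1
  · exact absurd (hE i tk t1C hi hti ht1) (hne t1C ht1)

lemma errC_of_errCd (hC : C ≠ []) (hwf : C.WellFormed) (hdet : IsDeterminization C Cd S)
    {t1C : T} (ht1 : C.TokOf 1 t1C) {p : List α}
    (hE : ∀ k tk t1, Cd.Reach k p → Cd.TokOf k tk → Cd.TokOf 1 t1 → tk = t1) :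
    ∀ i ti t1, C.Reach i p → C.TokOf i ti → C.TokOf 1 t1 → ti = t1 := by
  intro i ti t1 hr hti ht1'
  have ht1e : t1 = t1C := tokOf_fun ht1' ht1
  rw [ht1e]
  obtain ⟨k, hk⟩ := (main_inv hdet p).2 ⟨i, hr⟩
  obtain ⟨tok, htok, hcl⟩ := cd_token_exists hdet hk
  have htokt1 : tok = t1C := hE k tok t1C hk htok (t1_cd hC hwf hdet ht1)
  rcases hcl with ⟨hall, _⟩ | ⟨_, _, _, hne, _⟩
  · exact hall i hr ti t1C hti ht1
  · exact absurd htokt1 (hne t1C ht1)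

/-- From a non-error Cd classification, extract the maximal non-error C-state. -/
lemma nonerrC_of_nonerrCd (hdet : IsDeterminization C Cd S)
    {t1C : T} (ht1 : C.TokOf 1 t1C) {p : List α} {k : ℤ} {tk : T}
    (hr : Cd.Reach k p) (htk : Cd.TokOf k tk) (hne : tk ≠ t1C) :
    ∃ i, C.Reach i p ∧ C.TokOf i tk ∧
      (∀ j tj, C.Reach j p → C.TokOf j tj → tj ≠ t1C → j ≤ i) := by
  rcases cd_tokOf_class hdet hr htk with ⟨_, h1⟩ | ⟨i, hi, hti, _, hmax⟩
  · exact absurd (tokOf_fun h1 ht1) hne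
  · exact ⟨i, hi, hti, fun j tj hrj htj hnej => hmax j hrj tj t1C htj ht1 hnej⟩

/-- From a non-error C-state, get a non-error Cd classification. -/
lemma nonerrCd_of_nonerrC (_hwf : C.WellFormed) (hdet : IsDeterminization C Cd S)
    {t1C : T} (ht1 : C.TokOf 1 t1C) {p : List α} {i : ℤ} {ti : T}
    (hr : C.Reach i p) (hti : C.TokOf i ti) (hne : ti ≠ t1C) :
    ∃ k tk, Cd.Reach k p ∧ Cd.TokOf k tk ∧ tk ≠ t1C := by
  obtain ⟨k, hk⟩ := (main_inv hdet p).2 ⟨i, hr⟩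
  obtain ⟨tok, htok, hcl⟩ := cd_token_exists hdet hk
  refine ⟨k, tok, hk, htok, ?_⟩
  rcases hcl with ⟨hall, _⟩ | ⟨_, _, _, hnet, _⟩
  · exact absurd (hall i hr ti t1C hti ht1) hne
  · exact hnet t1C ht1

end Det2
end DetProof
/-- If `C` is well-formed and `C_det` is obtained from `C` by the
determinization procedure, then the two classifiers classify every word identically:
if `C` classifies `w` as `(w', t')` and `C_det` classifies `w` as `(w'', t'')`,
then `w' = w''` and `t' = t''`. -/
theorem determinization_correct {α : Type*} [LinearOrder α] [OrderBot α] {T : Type*}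
    (C Cd : Classifier α T) (S : ℕ → Set ℤ)
    (hC : C ≠ []) (hwf : Classifier.WellFormed C)
    (hdet : Classifier.IsDeterminization C Cd S)
    (w w' w'' : List α) (t' t'' : T)
    (h1 : Classifier.ClassifiesAs C w w' t')
    (h2 : Classifier.ClassifiesAs Cd w w'' t'') :
    w' = w'' ∧ t' = t'' := by
  classical
  obtain ⟨t1C, ht1⟩ := DetProof.tokOf_one_exists C hC
  have ht1d : Cd.TokOf 1 t1C := DetProof.t1_cd hC hwf hdet ht1
  rcases h1 with ⟨hw1, ht'1, hAllC⟩ | ⟨hpre1, i, t1a, ht1a, hRi, hti, hnei, hmaxi, hlen1⟩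
  · -- C classifies as error
    have ht'e : t' = t1C := DetProof.tokOf_fun ht'1 ht1
    rcases h2 with ⟨hw2, ht''1, _⟩ | ⟨hpre2, k, t1b, ht1b, hRk, htk, hnek, _, _⟩
    · refine ⟨by rw [hw1, hw2], ?_⟩
      rw [ht'e, DetProof.tokOf_fun ht''1 ht1d]
    · -- Cd found a non-error prefix: contradiction
      exfalso
      have ht1be : t1b = t1C := DetProof.tokOf_fun ht1b ht1d
      have hnek' : t'' ≠ t1C := by rw [← ht1be]; exact hnek
      obtain ⟨m, hrm, htm, _⟩ := DetProof.nonerrC_of_nonerrCd hdet ht1 hRk htk hnek'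
      exact hnek' (hAllC w'' m t'' t1C hpre2 hrm htm ht1)
  · -- C found a non-error prefix w'
    have ht1ae : t1a = t1C := DetProof.tokOf_fun ht1a ht1
    have hnei' : t' ≠ t1C := by rw [← ht1ae]; exact hnei
    rcases h2 with ⟨hw2, ht''1, hAllCd⟩ | ⟨hpre2, k, t1b, ht1b, hRk, htk, hnek, hmaxk, hlen2⟩
    · -- Cd classifies as error: contradiction
      exfalso
      obtain ⟨k, tk, hrk, htok, hnet⟩ :=
        DetProof.nonerrCd_of_nonerrC hwf hdet ht1 hRi hti hnei'
      exact hnet (hAllCd w' k tk t1C hpre1 hrk htok ht1d)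
    · -- both non-error
      have ht1be : t1b = t1C := DetProof.tokOf_fun ht1b ht1d
      have hnek' : t'' ≠ t1C := by rw [← ht1be]; exact hnek
      have hww : w' = w'' := by
        rcases lt_trichotomy w'.length w''.length with hlt | heq | hgt
        · exfalso
          obtain ⟨m, hrm, htm, _⟩ := DetProof.nonerrC_of_nonerrCd hdet ht1 hRk htk hnek'
          exact hnek' (hlen1 w'' m t'' t1C hpre2 hlt hrm htm ht1)
        · rcases List.prefix_or_prefix_of_prefix hpre1 hpre2 with h | h
          · exact List.IsPrefix.eq_of_length h heq
          · exact (List.IsPrefix.eq_of_length h heq.symm).symm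
        · exfalso
          obtain ⟨k2, tk2, hrk2, htok2, hnet2⟩ :=
            DetProof.nonerrCd_of_nonerrC hwf hdet ht1 hRi hti hnei'
          exact hnet2 (hlen2 w' k2 tk2 t1C hpre1 hgt hrk2 htok2 ht1d)
      subst hww
      obtain ⟨m, hrm, htm, hmaxm⟩ := DetProof.nonerrC_of_nonerrCd hdet ht1 hRk htk hnek'
      have him : i ≤ m := hmaxm i t' hRi hti hnei'
      have hmi : m ≤ i := hmaxi m t'' hrm htm (by rw [ht1ae]; exact hnek')
      have : i = m := le_antisymm him hmi
      subst this
      exact ⟨rfl, DetProof.tokOf_fun hti htm⟩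
end

section
/- In the subset construction for a classifier C, for every word w let R_w = { r | (1,ε) ⊢* (r, w) in C }; then for the determinized classifier C_det: if R_w ≠ ∅ then C_det reaches exactly the state H(R_w) after reading w (where H is the map from discovered subsets to state indices), and its token label equals CLASS(R_w); if R_w = ∅ then C_det reaches no state after reading w. -/
namespace Classifier

variable {α : Type*} [LinearOrder α] [OrderBot α] {T : Type*}

lemma reach_eps_closed (C : Classifier α T) {i j : ℤ} {w : List α}
    (h : Reach C i w) (he : Relation.ReflTransGen (EpsStep C) i j) : Reach C j w := by
  induction he with
  | refl => exact h
  | tail _ hstep ih => exact ih.tail (Or.inl ⟨hstep, rfl⟩)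

lemma reach_nil_aux (C : Classifier α T) :
    ∀ p : ℤ × List α, Relation.ReflTransGen (Step C) (1, []) p → p.2 = [] →
      Relation.ReflTransGen (EpsStep C) 1 p.1 := by
  intro p h
  induction h with
  | refl => intro _; exact Relation.ReflTransGen.refl
  | @tail b c _ hstep ih =>
    intro hw
    rcases hstep with ⟨he, heq⟩ | ⟨σ, _, heq⟩
    · rw [hw] at heq
      exact (ih heq.symm).tail he
    · rw [hw] at heq; simp at heq

lemma reach_nil_iff (C : Classifier α T) (i : ℤ) :
    Reach C i [] ↔ Relation.ReflTransGen (EpsStep C) 1 i := by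
  constructor
  · intro h; exact reach_nil_aux C (i, []) h rfl
  · intro h; exact reach_eps_closed C Relation.ReflTransGen.refl h

lemma reach_append_aux (C : Classifier α T) :
    ∀ p : ℤ × List α, Relation.ReflTransGen (Step C) (1, []) p →
    ∀ w σ, p.2 = w ++ [σ] → ∃ a b, Reach C a w ∧ SymStep C σ a b ∧
      Relation.ReflTransGen (EpsStep C) b p.1 := by
  intro p h
  induction h with
  | refl => intro w σ hw; simp at hw
  | @tail b c hpath hstep ih =>
    intro w σ hw
    rcases hstep with ⟨he, heq⟩ | ⟨σ', hs, heq⟩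
    · rw [hw] at heq
      obtain ⟨a, b', h1, h2, h3⟩ := ih w σ heq.symm
      exact ⟨a, b', h1, h2, h3.tail he⟩
    · rw [hw] at heq
      obtain ⟨hb2, hσ⟩ := List.append_inj' heq.symm rfl
      have hσ' : σ' = σ := by simpa using hσ
      refine ⟨b.1, c.1, ?_, hσ' ▸ hs, Relation.ReflTransGen.refl⟩
      have : b = (b.1, w) := by rw [Prod.ext_iff]; exact ⟨rfl, hb2⟩
      rw [Reach, ← this]; exact hpath

lemma reach_append_iff (C : Classifier α T) (r : ℤ) (w : List α) (σ : α) :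
    Reach C r (w ++ [σ]) ↔ ∃ a b, Reach C a w ∧ SymStep C σ a b ∧
      Relation.ReflTransGen (EpsStep C) b r := by
  constructor
  · intro h; exact reach_append_aux C (r, w ++ [σ]) h w σ rfl
  · rintro ⟨a, b, h1, h2, h3⟩
    exact reach_eps_closed C (h1.tail (Or.inr ⟨σ, h2, rfl⟩)) h3

lemma no_eps {Cd : Classifier α T}
    (hε : ∀ i (h : i < Cd.length), (Cd.get ⟨i, h⟩).1 = ∅) :
    ∀ a b : ℤ, ¬ EpsStep Cd a b := by
  rintro a b ⟨h, _, hmem⟩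
  rw [hε _ h] at hmem
  exact absurd hmem (Finset.notMem_empty _)

lemma eps_rtg_eq {Cd : Classifier α T}
    (hε : ∀ i (h : i < Cd.length), (Cd.get ⟨i, h⟩).1 = ∅) {a b : ℤ}
    (h : Relation.ReflTransGen (EpsStep Cd) a b) : a = b := by
  induction h with
  | refl => rfl
  | tail _ hstep _ => exact absurd hstep (no_eps hε _ _)

lemma reach_set_append (C : Classifier α T) (w : List α) (σ : α) :
    {r | Reach C r (w ++ [σ])} = Clos C (NextSet C {r | Reach C r w} σ) := by
  ext r
  simp only [Set.mem_setOf_eq, reach_append_iff, Clos, NextSet]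
  constructor
  · rintro ⟨a, b, h1, h2, h3⟩; exact ⟨b, ⟨a, h1, h2⟩, h3⟩
  · rintro ⟨b, ⟨a, h1, h2⟩, h3⟩; exact ⟨a, b, h1, h2, h3⟩

lemma get_idx_eq (Cd : Classifier α T) {i j : ℕ} (hi : i < Cd.length)
    (hj : j < Cd.length) (h : i = j) : Cd.get ⟨i, hi⟩ = Cd.get ⟨j, hj⟩ := by
  subst h; rfl

end Classifier

/-- With `R_w = { r | (1,ε) ⊢* (r,w) in C }`: if `R_w ≠ ∅` then the
determinized classifier reaches, after reading `w`, exactly one state, namely the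
state `H(R_w)` associated with the subset `R_w`, and its token label is `CLASS(R_w)`;
if `R_w = ∅` then `C_det` reaches no state after reading `w`. -/
theorem subset_construction_invariant {α : Type*} [LinearOrder α] [OrderBot α]
    {T : Type*} (C Cd : Classifier α T) (S : ℕ → Set ℤ)
    (hC : C ≠ []) (hdet : Classifier.IsDeterminization C Cd S) (w : List α) :
    (({r | Classifier.Reach C r w} : Set ℤ).Nonempty →
      ∃ k : ℕ, 1 ≤ k ∧ k ≤ Cd.length ∧ S k = {r | Classifier.Reach C r w} ∧
        Classifier.Reach Cd (k : ℤ) w ∧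
        (∀ j : ℤ, Classifier.Reach Cd j w → j = (k : ℤ)) ∧
        (∀ t, Classifier.TokOf Cd (k : ℤ) t →
          Classifier.ClassOf C {r | Classifier.Reach C r w} t)) ∧
    (({r | Classifier.Reach C r w} : Set ℤ) = ∅ →
      ∀ j : ℤ, ¬ Classifier.Reach Cd j w) := by
  obtain ⟨h1, h2, h3, h4, h5, h6⟩ := hdet
  have hnil : ∀ j : ℤ, Classifier.Reach Cd j [] ↔ j = 1 := by
    intro j
    rw [Classifier.reach_nil_iff]
    constructor
    · intro h; exact (Classifier.eps_rtg_eq h4 h).symm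
    · rintro rfl; exact Relation.ReflTransGen.refl
  have happ : ∀ (j : ℤ) (u : List α) (σ : α),
      Classifier.Reach Cd j (u ++ [σ]) ↔
        ∃ a, Classifier.Reach Cd a u ∧ Classifier.SymStep Cd σ a j := by
    intro j u σ
    rw [Classifier.reach_append_iff]
    constructor
    · rintro ⟨a, b, ha, hs, he⟩
      exact ⟨a, ha, (Classifier.eps_rtg_eq h4 he) ▸ hs⟩
    · rintro ⟨a, ha, hs⟩; exact ⟨a, j, ha, hs, Relation.ReflTransGen.refl⟩
  have hS1R : S 1 = {r | Classifier.Reach C r []} := by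
    rw [h2]; ext r
    simp [Classifier.Clos, Classifier.reach_nil_iff]
  induction w using List.reverseRecOn with
  | nil =>
    constructor
    · intro _
      refine ⟨1, le_refl 1, h1, by simpa using hS1R, Relation.ReflTransGen.refl, ?_, ?_⟩
      · intro j hj; rw [hnil] at hj; simp [hj]
      · intro t ht
        obtain ⟨hlen, _, hget⟩ := ht
        have h0 : 0 < Cd.length := by omega
        have hcls := h5 0 h0
        rw [Classifier.get_idx_eq Cd hlen h0 (by omega)] at hget
        rw [hget] at hcls
        rwa [show (0 : ℕ) + 1 = 1 from rfl, hS1R] at hcls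
    · intro hx
      have : (1 : ℤ) ∈ ({r | Classifier.Reach C r []} : Set ℤ) :=
        Relation.ReflTransGen.refl
      rw [hx] at this
      exact absurd this (Set.notMem_empty 1)
  | append_singleton w σ ih =>
    obtain ⟨ih1, ih2⟩ := ih
    by_cases hR : ({r | Classifier.Reach C r w} : Set ℤ) = ∅
    · have hRσ : ({r | Classifier.Reach C r (w ++ [σ])} : Set ℤ) = ∅ := by
        rw [Classifier.reach_set_append]
        ext r
        simp only [Classifier.Clos, Classifier.NextSet, Set.mem_setOf_eq,
          Set.mem_empty_iff_false, iff_false]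
        rintro ⟨b, ⟨a, ha, _⟩, _⟩
        have hmem : a ∈ ({r | Classifier.Reach C r w} : Set ℤ) := ha
        rw [hR] at hmem
        exact hmem
      constructor
      · intro hne; rw [hRσ] at hne; simpa using hne
      · intro _ j hj
        rw [happ] at hj
        obtain ⟨a, ha, _⟩ := hj
        exact ih2 hR a ha
    · have hne : ({r | Classifier.Reach C r w} : Set ℤ).Nonempty :=
        Set.nonempty_iff_ne_empty.mpr hR
      obtain ⟨k, hk1, hk2, hSk, hreach, huniq, htok⟩ := ih1 hne
      have hidx : k - 1 < Cd.length := by omega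
      have htrans := h6 (k - 1) hidx σ
      rw [show (k - 1) + 1 = k by omega, hSk] at htrans
      have hRσ : ({r | Classifier.Reach C r (w ++ [σ])} : Set ℤ) =
          Classifier.Clos C (Classifier.NextSet C {r | Classifier.Reach C r w} σ) :=
        Classifier.reach_set_append C w σ
      by_cases hN : Classifier.NextSet C {r | Classifier.Reach C r w} σ = ∅
      · have hnone := htrans.1 hN
        have hRσe : ({r | Classifier.Reach C r (w ++ [σ])} : Set ℤ) = ∅ := by
          rw [hRσ, hN]
          ext r
          simp [Classifier.Clos]
        constructor
        · intro hx; rw [hRσe] at hx; simpa using hx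
        · intro _ j hj
          rw [happ] at hj
          obtain ⟨a, ha, hs⟩ := hj
          have haa := huniq a ha
          subst haa
          obtain ⟨hl, _, hval⟩ := hs
          rw [Classifier.get_idx_eq Cd hl hidx (by omega)] at hval
          rw [hnone] at hval
          cases hval
      · obtain ⟨k', hk'1, hk'2, hSk', hval⟩ := htrans.2 hN
        have hRne : ({r | Classifier.Reach C r (w ++ [σ])} : Set ℤ).Nonempty := by
          rw [hRσ]
          obtain ⟨b, hb⟩ := Set.nonempty_iff_ne_empty.mpr hN
          exact ⟨b, b, hb, Relation.ReflTransGen.refl⟩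
        have hsym : Classifier.SymStep Cd σ (k : ℤ) (k' : ℤ) := by
          have hl : (((k : ℤ)) - 1).toNat < Cd.length := by omega
          refine ⟨hl, by exact_mod_cast hk1, ?_⟩
          rw [Classifier.get_idx_eq Cd hl hidx (by omega), hval]
          congr 1
          omega
        constructor
        · intro _
          refine ⟨k', hk'1, hk'2, by rw [hSk', ← hRσ], ?_, ?_, ?_⟩
          · rw [happ]; exact ⟨(k : ℤ), hreach, hsym⟩
          · intro j hj
            rw [happ] at hj
            obtain ⟨a, ha, hs⟩ := hj
            have haa := huniq a ha
            subst haa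
            obtain ⟨hl, _, hval'⟩ := hs
            rw [Classifier.get_idx_eq Cd hl hidx (by omega), hval] at hval'
            have := Option.some.inj hval'
            omega
          · intro t ht
            obtain ⟨hl, _, hget⟩ := ht
            have hl' : k' - 1 < Cd.length := by omega
            have hcls := h5 (k' - 1) hl'
            rw [Classifier.get_idx_eq Cd hl hl' (by omega)] at hget
            rw [hget, show (k' - 1) + 1 = k' by omega, hSk', ← hRσ] at hcls
            exact hcls
        · intro hx
          rw [hx] at hRne
          simpa using hRne
end

section
/- Let C be a deterministic classifier and define the optimal reachability function ρ by: ρ(i)(t) is the minimal length n of a transition path from state i to a state j with t_j = t ≠ t₁ (undefined if no such path exists). Then the iterative procedure that initializes ρ(i) = {(tᵢ,0)} for states with tᵢ ≠ t₁ and ρ(i) = {} otherwise, and repeatedly relaxes along back-transitions (for i with a transition into u and (t,n) ∈ ρ(u), setting ρ(i)(t) := min(ρ(i)(t), n+1)) until no change occurs, terminates and computes exactly this optimal ρ. -/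
/-- A deterministic classifier: a flat list of states, each with a border function
giving relative symbol transitions (`none` = `#`) and a token class. State `1`
carries the error class `t₁`. -/
abbrev DetClassifier (α : Type*) [LinearOrder α] [OrderBot α] (T : Type*) :=
  List (BorderFun α (Option ℤ) × T)

namespace DetClassifier

variable {α : Type*} [LinearOrder α] [OrderBot α] {T : Type*}

/-- `i` is a state of `C` (1-indexed). -/
def IsState (C : DetClassifier α T) (i : ℤ) : Prop := 1 ≤ i ∧ i ≤ (C.length : ℤ)

/-- `TokOf C i t`: state `i` exists and carries token `t`. -/
def TokOf (C : DetClassifier α T) (i : ℤ) (t : T) : Prop :=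
  ∃ h : (i - 1).toNat < C.length, 1 ≤ i ∧ (C.get ⟨(i - 1).toNat, h⟩).2 = t

/-- The successor state of `i` on symbol `σ`: `i + φᵢ^≤(σ)` if `φᵢ^≤(σ) ≠ #`. -/
noncomputable def Next (C : DetClassifier α T) (i : ℤ) (σ : α) : Option ℤ :=
  if h : (i - 1).toNat < C.length ∧ 1 ≤ i then
    ((C.get ⟨(i - 1).toNat, h.1⟩).1.leVal σ).map (i + ·)
  else none

/-- The transition relation on configurations. -/
def Step (C : DetClassifier α T) : ℤ × List α → ℤ × List α → Prop := fun p q =>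
  ∃ σ, Next C p.1 σ = some q.1 ∧ q.2 = p.2 ++ [σ]

/-- `Reach C i w`: `(1, ε) ⊢* (i, w)`. -/
def Reach (C : DetClassifier α T) (i : ℤ) (w : List α) : Prop :=
  Relation.ReflTransGen (Step C) (1, []) (i, w)

/-- Classification of `w` as the pair `(w', t)`: `w'` is the maximal prefix of `w`
reaching a non-error state and `t` is its token; `(ε, t₁)` if there is none. -/
def ClassifiesAs (C : DetClassifier α T) (w w' : List α) (t : T) : Prop :=
  (w' = [] ∧ TokOf C 1 t ∧
    ∀ p i ti t1, p <+: w → Reach C i p → TokOf C i ti → TokOf C 1 t1 → ti = t1) ∨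
  (w' <+: w ∧ ∃ i t1, TokOf C 1 t1 ∧ Reach C i w' ∧ TokOf C i t ∧ t ≠ t1 ∧
    (∀ j tj, Reach C j w' → TokOf C j tj → tj ≠ t1 → j ≤ i) ∧
    (∀ p j tj t1', p <+: w → w'.length < p.length →
      Reach C j p → TokOf C j tj → TokOf C 1 t1' → tj = t1'))

/-- The lifting of a relation on states to `Option ℤ`, with `# ≡ #` and `#` not
equivalent to any state. -/
def OptRel (r : ℤ → ℤ → Prop) : Option ℤ → Option ℤ → Prop := fun a b =>
  (a = none ∧ b = none) ∨ ∃ x y, a = some x ∧ b = some y ∧ r x y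

/-- `r` is an equivalence relation on the states of `C` such that related states
carry the same token and have related successors on every symbol. -/
def Congruence (C : DetClassifier α T) (r : ℤ → ℤ → Prop) : Prop :=
  (∀ i, IsState C i → r i i) ∧
  (∀ i j, r i j → r j i) ∧
  (∀ i j k, r i j → r j k → r i k) ∧
  (∀ i j, r i j → IsState C i ∧ IsState C j) ∧
  (∀ i j, r i j → ∀ ti tj, TokOf C i ti → TokOf C j tj → ti = tj) ∧
  (∀ i j, r i j → ∀ σ, OptRel r (Next C i σ) (Next C j σ))

/-- `r` is the coarsest congruence on `C`. -/
def Coarsest (C : DetClassifier α T) (r : ℤ → ℤ → Prop) : Prop :=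
  Congruence C r ∧ ∀ r', Congruence C r' → ∀ i j, r' i j → r i j

/-- `Q` is the quotient classifier `C / r`: there is a map `f` sending each state of
`C` to the (index of the) representative of its class in `Q`, with state `1` in the
class represented by state `1`, identifying exactly `r`-related states, surjective
onto the states of `Q`, preserving tokens and commuting with transitions. -/
def IsQuotient (C Q : DetClassifier α T) (r : ℤ → ℤ → Prop) : Prop :=
  ∃ f : ℤ → ℤ,
    f 1 = 1 ∧
    (∀ i, IsState C i → IsState Q (f i)) ∧
    (∀ k, IsState Q k → ∃ i, IsState C i ∧ f i = k) ∧
    (∀ i j, IsState C i → IsState C j → (r i j ↔ f i = f j)) ∧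
    (∀ i t, IsState C i → (TokOf C i t ↔ TokOf Q (f i) t)) ∧
    (∀ i σ, IsState C i → Next Q (f i) σ = (Next C i σ).map f)

/-- `ReachInN C n i j`: there is a path of exactly `n` symbol transitions from `i` to `j`. -/
def ReachInN (C : DetClassifier α T) : ℕ → ℤ → ℤ → Prop
  | 0, i, j => i = j
  | n + 1, i, j => ∃ σ k, Next C i σ = some k ∧ ReachInN C n k j

end DetClassifier

namespace DetClassifier

variable {α : Type*} [LinearOrder α] [OrderBot α] {T : Type*}

/-- `ρ` is a possible result of the iterative reachability procedure: it contains the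
initialization `ρ(i) = {(tᵢ, 0)}` for non-error states, it is stable under relaxation
along back-transitions, and every recorded value is justified either by the
initialization or by a relaxation step. -/
def ProcResult (C : DetClassifier α T) (t₁ : T) (ρ : ℤ → T → Option ℕ) : Prop :=
  (∀ i t, TokOf C i t → t ≠ t₁ → ρ i t = some 0) ∧
  (∀ i σ k t n, Next C i σ = some k → ρ k t = some n →
    ∃ m, ρ i t = some m ∧ m ≤ n + 1) ∧
  (∀ i t n, ρ i t = some n →
    (n = 0 ∧ TokOf C i t ∧ t ≠ t₁) ∨
    (∃ σ k n', Next C i σ = some k ∧ ρ k t = some n' ∧ n = n' + 1))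

/-- `ρ` is the optimal reachability function: `ρ(i)(t) = n` iff `t ≠ t₁`, there is a
path of length `n` from `i` to a state carrying token `t`, and `n` is minimal. -/
def Optimal (C : DetClassifier α T) (t₁ : T) (ρ : ℤ → T → Option ℕ) : Prop :=
  ∀ i t n, ρ i t = some n ↔
    (t ≠ t₁ ∧ (∃ j, ReachInN C n i j ∧ TokOf C j t) ∧
      ∀ m, (∃ j, ReachInN C m i j ∧ TokOf C j t) → n ≤ m)

lemma reachInN_cases {α : Type*} [LinearOrder α] [OrderBot α] {T : Type*}
    {C : DetClassifier α T} {n : ℕ} {i j : ℤ} (h : ReachInN C n i j) :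
    (n = 0 ∧ i = j) ∨
    ∃ n' σ k, n = n' + 1 ∧ Next C i σ = some k ∧ ReachInN C n' k j := by
  cases n with
  | zero => exact Or.inl ⟨rfl, h⟩
  | succ n =>
    obtain ⟨σ, k, hnext, h'⟩ := h
    exact Or.inr ⟨n, σ, k, rfl, hnext, h'⟩

/-- Soundness: any value recorded by a procedure result is witnessed by a path. -/
lemma proc_sound {α : Type*} [LinearOrder α] [OrderBot α] {T : Type*}
    {C : DetClassifier α T} {t₁ : T} {ρ : ℤ → T → Option ℕ}
    (hρ : ProcResult C t₁ ρ) :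
    ∀ n i t, ρ i t = some n → t ≠ t₁ ∧ ∃ j, ReachInN C n i j ∧ TokOf C j t := by
  intro n
  induction n with
  | zero =>
    intro i t h
    rcases hρ.2.2 i t 0 h with ⟨_, hi, ht⟩ | ⟨σ, k, n', _, _, hcon⟩
    · exact ⟨ht, i, rfl, hi⟩
    · omega
  | succ n ih =>
    intro i t h
    rcases hρ.2.2 i t (n + 1) h with ⟨hcon, _, _⟩ | ⟨σ, k, n', hnext, hk, heq⟩
    · omega
    obtain rfl : n' = n := by omega
    obtain ⟨ht, j, hpath, htok⟩ := ih k t hk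
    exact ⟨ht, j, ⟨σ, k, hnext, hpath⟩, htok⟩

/-- Upper bound: any path yields a recorded value of at most its length. -/
lemma proc_upper {α : Type*} [LinearOrder α] [OrderBot α] {T : Type*}
    {C : DetClassifier α T} {t₁ : T} {ρ : ℤ → T → Option ℕ}
    (hρ : ProcResult C t₁ ρ) :
    ∀ m i j t, ReachInN C m i j → TokOf C j t → t ≠ t₁ →
      ∃ m' ≤ m, ρ i t = some m' := by
  intro m
  induction m with
  | zero =>
    intro i j t hpath htok ht
    cases hpath
    exact ⟨0, le_refl 0, hρ.1 i t htok ht⟩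
  | succ m ih =>
    intro i j t hpath htok ht
    obtain ⟨σ, k, hnext, hpath'⟩ := hpath
    obtain ⟨m', hm', hk⟩ := ih k j t hpath' htok ht
    obtain ⟨m'', hm'', hle⟩ := hρ.2.1 i σ k t m' hnext hk
    exact ⟨m'', by omega, hm''⟩

end DetClassifier

/-- The iterative relaxation procedure terminates and computes exactly
the optimal reachability function: a result of the procedure exists, and every result
of the procedure is the optimal `ρ` (minimal path lengths to non-error tokens). -/
theorem reachability_correct {α : Type*} [LinearOrder α] [OrderBot α] {T : Type*}
    (C : DetClassifier α T) (t₁ : T) (h1 : DetClassifier.TokOf C 1 t₁) :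
    (∃ ρ : ℤ → T → Option ℕ, DetClassifier.ProcResult C t₁ ρ) ∧
    (∀ ρ : ℤ → T → Option ℕ, DetClassifier.ProcResult C t₁ ρ →
      DetClassifier.Optimal C t₁ ρ) := by
  classical
  open DetClassifier in
  have main : ∀ ρ : ℤ → T → Option ℕ, ProcResult C t₁ ρ → Optimal C t₁ ρ := by
    intro ρ hρ i t n
    constructor
    · intro h
      obtain ⟨ht, j, hpath, htok⟩ := proc_sound hρ n i t h
      refine ⟨ht, ⟨j, hpath, htok⟩, ?_⟩
      intro m ⟨j', hpath', htok'⟩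
      obtain ⟨m', hm', hval⟩ := proc_upper hρ m i j' t hpath' htok' ht
      rw [h] at hval
      simp only [Option.some.injEq] at hval
      omega
    · rintro ⟨ht, ⟨j, hpath, htok⟩, hmin⟩
      obtain ⟨m', hm', hval⟩ := proc_upper hρ n i j t hpath htok ht
      obtain ⟨-, j', hpath', htok'⟩ := proc_sound hρ m' i t hval
      have := hmin m' ⟨j', hpath', htok'⟩
      obtain rfl : m' = n := le_antisymm hm' this
      exact hval
  refine ⟨⟨fun i t => if h : t ≠ t₁ ∧ ∃ n, ∃ j, ReachInN C n i j ∧ TokOf C j t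
      then some (Nat.find h.2) else none, ?_, ?_, ?_⟩, main⟩
  · intro i t htok ht
    have hc : t ≠ t₁ ∧ ∃ n, ∃ j, ReachInN C n i j ∧ TokOf C j t := ⟨ht, 0, i, rfl, htok⟩
    dsimp only
    rw [dif_pos hc]
    simp only [Option.some.injEq]
    exact Nat.eq_zero_of_le_zero (Nat.find_le ⟨i, rfl, htok⟩)
  · intro i σ k t n hnext hk
    dsimp only at hk ⊢
    by_cases hc : t ≠ t₁ ∧ ∃ n, ∃ j, ReachInN C n k j ∧ TokOf C j t
    · rw [dif_pos hc] at hk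
      simp only [Option.some.injEq] at hk
      obtain ⟨j, hpath, htok⟩ := Nat.find_spec hc.2
      have hc' : t ≠ t₁ ∧ ∃ n, ∃ j, ReachInN C n i j ∧ TokOf C j t :=
        ⟨hc.1, Nat.find hc.2 + 1, j, ⟨σ, k, hnext, hpath⟩, htok⟩
      rw [dif_pos hc']
      refine ⟨Nat.find hc'.2, rfl, ?_⟩
      have h2 : Nat.find hc'.2 ≤ Nat.find hc.2 + 1 :=
        Nat.find_le ⟨j, ⟨σ, k, hnext, hpath⟩, htok⟩
      omega
    · rw [dif_neg hc] at hk
      exact absurd hk (by simp)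
  · intro i t n hval0
    dsimp only at hval0
    by_cases hc : t ≠ t₁ ∧ ∃ n, ∃ j, ReachInN C n i j ∧ TokOf C j t
    swap
    · rw [dif_neg hc] at hval0
      exact absurd hval0 (by simp)
    rw [dif_pos hc] at hval0
    simp only [Option.some.injEq] at hval0
    obtain ⟨j, hpath, htok⟩ := Nat.find_spec hc.2
    rw [hval0] at hpath
    rcases reachInN_cases hpath with ⟨rfl, rfl⟩ | ⟨n', σ, k, rfl, hnext, hpath'⟩
    · exact Or.inl ⟨rfl, htok, hc.1⟩
    · rename_i n0
      refine Or.inr ⟨σ, k, n', hnext, ?_, rfl⟩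
      have hck : t ≠ t₁ ∧ ∃ m, ∃ j, ReachInN C m k j ∧ TokOf C j t :=
        ⟨hc.1, n', j, hpath', htok⟩
      dsimp only
      rw [dif_pos hck]
      simp only [Option.some.injEq]
      have h1 : Nat.find hck.2 ≤ n' := Nat.find_le ⟨j, hpath', htok⟩
      obtain ⟨j', hp'', ht''⟩ := Nat.find_spec hck.2
      have h2 : n' + 1 ≤ Nat.find hck.2 + 1 := by
        rw [← hval0]
        exact Nat.find_le ⟨j', ⟨σ, k, hnext, hp''⟩, ht''⟩
      omega
end
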